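/- arXiv:2006.08982 — 5 statements merged into one kernel-verified Lean document; each statement's English description precedes it below -/
import Mathlib

section
/- Any multivariate continuous function can be represented as a superposition of one-dimensional functions: for every n ≥ 1 and every continuous function f : [0,1]^n → ℝ, there exist continuous one-variable functions f_q : ℝ → ℝ (q = 1, …, 2n+1) and g_{q,p} : [0,1] → ℝ (q = 1, …, 2n+1; p = 1, …, n) such that f(t_1, …, t_n) = Σ_{q=1}^{2n+1} f_q( Σ_{p=1}^{n} g_{q,p}(t_p) ) for all (t_1, …, t_n) ∈ [0,1]^n. -/
namespace KA


/-- retraction of the real line: constant `i+1` on `[i+γ, i+1]`, climbing on `[i, i+γ]`. -/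
noncomputable def rt (γ s : ℝ) : ℝ := ⌊s⌋ + min 1 (Int.fract s / γ)

variable {γ : ℝ}

lemma rt_mono (hγ : 0 < γ) : Monotone (rt γ) := by
  intro s s' hss
  rcases eq_or_lt_of_le (Int.floor_le_floor hss) with hf | hf
  · unfold rt
    rw [← hf]
    have : Int.fract s ≤ Int.fract s' := by
      unfold Int.fract; rw [← hf]; linarith
    gcongr
  · unfold rt
    have h1 : min 1 (Int.fract s / γ) ≤ 1 := min_le_left _ _
    have h2 : (0:ℝ) ≤ min 1 (Int.fract s' / γ) :=
      le_min (by norm_num) (div_nonneg (Int.fract_nonneg _) hγ.le)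
    have : (⌊s⌋ : ℝ) + 1 ≤ (⌊s'⌋ : ℝ) := by exact_mod_cast hf
    linarith

lemma rt_surj (hγ : 0 < γ) (hγ1 : γ ≤ 1) : Function.Surjective (rt γ) := by
  intro y
  refine ⟨(⌊y⌋ : ℝ) + γ * Int.fract y, ?_⟩
  have hfr0 : (0:ℝ) ≤ Int.fract y := Int.fract_nonneg _
  have hfr1 : Int.fract y < 1 := Int.fract_lt_one _
  have hb : (0:ℝ) ≤ γ * Int.fract y := by positivity
  have h2 : γ * Int.fract y < 1 := by nlinarith
  have hfl : ⌊(⌊y⌋ : ℝ) + γ * Int.fract y⌋ = ⌊y⌋ := by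
    rw [add_comm, Int.floor_add_intCast, Int.floor_eq_zero_iff.2 ⟨hb, h2⟩, zero_add]
  have hfrac : Int.fract ((⌊y⌋ : ℝ) + γ * Int.fract y) = γ * Int.fract y := by
    unfold Int.fract at *
    rw [hfl]; ring
  unfold rt
  rw [hfl, hfrac, mul_comm γ, mul_div_assoc, div_self hγ.ne', mul_one,
    min_eq_right hfr1.le]
  exact Int.floor_add_fract y

lemma rt_cont (hγ : 0 < γ) (hγ1 : γ ≤ 1) : Continuous (rt γ) :=
  Monotone.continuous_of_surjective (rt_mono hγ) (rt_surj hγ hγ1)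

lemma rt_dist (hγ : 0 < γ) (s : ℝ) : |rt γ s - s| ≤ 1 := by
  have h0 : (0:ℝ) ≤ min 1 (Int.fract s / γ) :=
    le_min (by norm_num) (div_nonneg (Int.fract_nonneg _) hγ.le)
  have h1 : min 1 (Int.fract s / γ) ≤ 1 := min_le_left _ _
  have hfr0 : (0:ℝ) ≤ Int.fract s := Int.fract_nonneg _
  have hfr1 : Int.fract s < 1 := Int.fract_lt_one _
  have : rt γ s - s = min 1 (Int.fract s / γ) - Int.fract s := by
    unfold rt Int.fract; ring
  rw [this, abs_le]; constructor <;> nlinarith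

lemma rt_const (hγ : 0 < γ) (i : ℤ) {s : ℝ} (h1 : (i:ℝ) + γ ≤ s) (h2 : s ≤ (i:ℝ) + 1) :
    rt γ s = (i : ℝ) + 1 := by
  rcases eq_or_lt_of_le h2 with rfl | hlt
  · unfold rt
    have : ((i:ℝ) + 1) = ((i + 1 : ℤ) : ℝ) := by push_cast; ring
    rw [this, Int.floor_intCast, Int.fract_intCast]
    norm_num
  · have hfl : ⌊s⌋ = i := by
      rw [Int.floor_eq_iff]
      constructor
      · have : (0:ℝ) < γ := hγ
        linarith
      · exact_mod_cast hlt
    have hfr : γ ≤ Int.fract s := by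
      unfold Int.fract; rw [hfl]; linarith
    unfold rt
    rw [hfl, min_eq_left ((one_le_div hγ).2 hfr)]

def Iv (N : ℕ) (h : ℝ) (q : ℕ) (i : ℤ) : Set ℝ :=
  Set.Icc (h*((q:ℝ) + N*i + 1)) (h*((q:ℝ) + N*i + N))

def Gap (N : ℕ) (h : ℝ) (q : ℕ) (i : ℤ) : Set ℝ :=
  Set.Ioo (h*((q:ℝ) + N*i)) (h*((q:ℝ) + N*i + 1))

noncomputable def ret (N : ℕ) (h : ℝ) (q : ℕ) (x : ℝ) : ℝ :=
  h*q + (h*N) * rt (1/N) ((x - h*q)/(h*N))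

def cpt (N : ℕ) (h : ℝ) (q : ℕ) (i : ℤ) : ℝ := h*q + h*N*((i:ℝ)+1)

variable {N : ℕ} {h : ℝ} {q : ℕ}

lemma ret_cont (hN : 1 ≤ N) : Continuous (ret N h q) := by
  have hN0 : (0:ℝ) < N := by exact_mod_cast Nat.lt_of_lt_of_le Nat.zero_lt_one hN
  have h1 : (0:ℝ) < 1/N := by positivity
  have h2 : (1:ℝ)/N ≤ 1 := by
    rw [div_le_one hN0]; exact_mod_cast hN
  exact continuous_const.add ((continuous_const.mul
    ((rt_cont h1 h2).comp ((continuous_id.sub continuous_const).div_const _))))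

lemma cpt_mem_Iv (hN : 1 ≤ N) (hh : 0 < h) (i : ℤ) : cpt N h q i ∈ Iv N h q i := by
  have hN1 : (1:ℝ) ≤ N := by exact_mod_cast hN
  constructor <;> · unfold cpt; nlinarith

lemma ret_const (hN : 1 ≤ N) (hh : 0 < h) {i : ℤ} {x : ℝ} (hx : x ∈ Iv N h q i) :
    ret N h q x = cpt N h q i := by
  have hN0 : (0:ℝ) < N := by exact_mod_cast Nat.lt_of_lt_of_le Nat.zero_lt_one hN
  have hhN : (0:ℝ) < h * N := by positivity
  obtain ⟨hx1, hx2⟩ := hx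
  have hexp : ((i:ℝ) + 1/N) * (h*N) = h*(N*i) + h := by field_simp
  have hs1 : (i:ℝ) + 1/N ≤ (x - h*q)/(h*N) := by
    rw [le_div_iff₀ hhN, hexp]; nlinarith
  have hs2 : (x - h*q)/(h*N) ≤ (i:ℝ) + 1 := by
    rw [div_le_iff₀ hhN]; nlinarith
  unfold ret cpt
  rw [rt_const (by positivity) i hs1 hs2]

lemma ret_dist (hN : 1 ≤ N) (hh : 0 < h) (x : ℝ) : |ret N h q x - x| ≤ h * N := by
  have hN0 : (0:ℝ) < N := by exact_mod_cast Nat.lt_of_lt_of_le Nat.zero_lt_one hN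
  have hhN : (0:ℝ) < h * N := by positivity
  have hd := rt_dist (γ := 1/N) (by positivity) ((x - h*q)/(h*N))
  have heq : ret N h q x - x = (h*N) * (rt (1/N) ((x - h*q)/(h*N)) - (x - h*q)/(h*N)) := by
    unfold ret; field_simp; ring
  rw [heq, abs_mul, abs_of_pos hhN]
  nlinarith [abs_nonneg (rt (1/N) ((x - h*q)/(h*N)) - (x - h*q)/(h*N))]

lemma gap_unique (hh : 0 < h) {q q' : ℕ} (hq : q + 2 ≤ N) (hq' : q' + 2 ≤ N)
    {i j : ℤ} {x : ℝ} (hx : x ∈ Gap N h q i) (hx' : x ∈ Gap N h q' j) : q = q' ∧ i = j := by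
  obtain ⟨a1, a2⟩ := hx
  obtain ⟨b1, b2⟩ := hx'
  have hAr : ((q:ℝ) + N*i) = (((q:ℤ) + N*i : ℤ):ℝ) := by push_cast; ring
  have hBr : ((q':ℝ) + N*j) = (((q':ℤ) + N*j : ℤ):ℝ) := by push_cast; ring
  set A : ℤ := (q:ℤ) + N*i with hA
  set B : ℤ := (q':ℤ) + N*j with hB
  rw [hAr] at a1 a2; rw [hBr] at b1 b2
  have hAB : A = B := by
    have h1' : (A:ℝ) < B + 1 := by nlinarith
    have h2' : (B:ℝ) < A + 1 := by nlinarith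
    have h1'' : A < B + 1 := by exact_mod_cast h1'
    have h2'' : B < A + 1 := by exact_mod_cast h2'
    omega
  rw [hA, hB] at hAB
  have hNZ : (0:ℤ) ≤ N := by exact_mod_cast Nat.zero_le N
  have hij : i = j := by
    rcases lt_trichotomy i j with hlt | heq | hgt
    · exfalso
      have h3 : (N:ℤ)*(i+1) ≤ N*j := mul_le_mul_of_nonneg_left (by omega) hNZ
      have h4 : (q:ℤ) ≤ N - 2 := by omega
      have h5 : (0:ℤ) ≤ (q':ℤ) := by positivity
      nlinarith
    · exact heq
    · exfalso
      have h3 : (N:ℤ)*(j+1) ≤ N*i := mul_le_mul_of_nonneg_left (by omega) hNZ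
      have h4 : (q':ℤ) ≤ N - 2 := by omega
      have h5 : (0:ℤ) ≤ (q:ℤ) := by positivity
      nlinarith
  constructor
  · have : (q:ℤ) = q' := by rw [hij] at hAB; omega
    exact_mod_cast this
  · exact hij

lemma gap_cover (hh : 0 < h) (hN : 1 ≤ N) (hq : q < N) {x : ℝ}
    (hx0 : 0 ≤ x) (hx1 : x ≤ 1) (hg : ∀ i : ℤ, x ∉ Gap N h q i) :
    ∃ i : ℤ, -2 ≤ i ∧ (i:ℝ) ≤ 1/h ∧ x ∈ Iv N h q i := by
  have hN0 : (0:ℝ) < N := by exact_mod_cast Nat.lt_of_lt_of_le Nat.zero_lt_one hN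
  set v : ℝ := (x/h - q)/N with hv
  set j : ℤ := ⌊v⌋ with hj
  have hjv : (j:ℝ) ≤ v := Int.floor_le v
  have hjv' : v < (j:ℝ) + 1 := Int.lt_floor_add_one v
  have hq0 : (0:ℝ) ≤ (q:ℝ) := by positivity
  have hxl : h*((q:ℝ) + N*j) ≤ x := by
    have h1 : (j:ℝ)*N ≤ x/h - q := by
      rw [hv, le_div_iff₀ hN0] at hjv; linarith
    have h2 : ((q:ℝ) + N*j) ≤ x/h := by nlinarith
    have h3 : ((q:ℝ) + N*j) * h ≤ x := by
      rw [← le_div_iff₀ hh]; exact h2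
    linarith
  have hxu : x < h*((q:ℝ) + N*j + N) := by
    have h1 : x/h - q < ((j:ℝ)+1)*N := by
      rw [hv, div_lt_iff₀ hN0] at hjv'; linarith
    have h2 : x/h < (q:ℝ) + N*j + N := by nlinarith
    have h3 : x < ((q:ℝ) + N*j + N) * h := by
      rw [← div_lt_iff₀ hh]; exact h2
    linarith
  have hjlb : -1 ≤ j := by
    rw [hj, Int.le_floor]
    have hx' : (0:ℝ) ≤ x/h := by positivity
    have hqN : (q:ℝ) ≤ N - 1 := by
      have : ((q:ℕ):ℝ) + 1 ≤ N := by exact_mod_cast hq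
      linarith
    push_cast
    rw [hv, le_div_iff₀ hN0]
    nlinarith
  have hjub : (j:ℝ) ≤ 1/h := by
    have hxh : x/h ≤ 1/h := by gcongr
    have h1 : v ≤ (1/h)/N := by
      rw [hv]; gcongr; linarith
    have h2 : (1/h)/N ≤ 1/h := by
      apply div_le_self (by positivity)
      exact_mod_cast hN
    linarith
  have hnotj := hg j
  simp only [Gap, Set.mem_Ioo, not_and, not_lt] at hnotj
  rcases le_or_gt x (h*((q:ℝ) + N*j)) with hcase | hcase
  · have hxeq : x = h*((q:ℝ) + N*j) := le_antisymm hcase hxl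
    have hN1 : (1:ℝ) ≤ N := by exact_mod_cast hN
    refine ⟨j - 1, by omega, by push_cast; linarith, ?_, ?_⟩
    · rw [hxeq]; push_cast; nlinarith
    · rw [hxeq]; push_cast; nlinarith
  · have hge := hnotj hcase
    exact ⟨j, by omega, hjub, hge, hxu.le⟩
lemma digit_inj {W : ℕ} (hW : 0 < W) : ∀ {k : ℕ} (d e : Fin k → ℕ),
    (∀ p, d p < W) → (∀ p, e p < W) →
    (∑ p, d p * W ^ (p:ℕ)) = (∑ p, e p * W ^ (p:ℕ)) → d = e := by
  intro k
  induction k with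
  | zero => intro d e _ _ _; funext p; exact p.elim0
  | succ k ih =>
    intro d e hd he hsum
    rw [Fin.sum_univ_succ, Fin.sum_univ_succ] at hsum
    have hre : ∀ (f : Fin (k+1) → ℕ), (∑ p : Fin k, f p.succ * W ^ ((p.succ : Fin (k+1)):ℕ))
        = W * ∑ p : Fin k, f p.succ * W ^ (p:ℕ) := by
      intro f
      rw [Finset.mul_sum]
      apply Finset.sum_congr rfl
      intro p _
      rw [Fin.val_succ, pow_succ]
      ring
    rw [hre d, hre e] at hsum
    simp only [Fin.val_zero, pow_zero, mul_one] at hsum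
    have h0 : d 0 = e 0 := by
      have h1 := congrArg (· % W) hsum
      simpa [Nat.add_mul_mod_self_left, Nat.mod_eq_of_lt (hd 0), Nat.mod_eq_of_lt (he 0)] using h1
    have htail : (fun p : Fin k => d p.succ) = (fun p => e p.succ) := by
      apply ih _ _ (fun p => hd p.succ) (fun p => he p.succ)
      have : W * (∑ p : Fin k, d p.succ * W ^ (p:ℕ)) = W * ∑ p : Fin k, e p.succ * W ^ (p:ℕ) := by
        omega
      exact Nat.eq_of_mul_eq_mul_left hW this
    funext p
    rcases Fin.eq_zero_or_eq_succ p with rfl | ⟨p', rfl⟩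
    · exact h0
    · exact congrFun htail p'

def Kc (n : ℕ) : Set (Fin n → ℝ) := Set.univ.pi fun _ => Set.Icc (0:ℝ) 1

def cube (n N : ℕ) (h : ℝ) (q : ℕ) (ι : Fin n → ℤ) : Set (Fin n → ℝ) :=
  Set.univ.pi fun p => Iv N h q (ι p)

noncomputable def idxF (n : ℕ) (h : ℝ) : Finset (Fin n → ℤ) :=
  Fintype.piFinset fun _ => Finset.Icc (-2) ⌈1/h⌉

noncomputable def yq {n : ℕ} (g : Fin n → ℝ → ℝ) (t : Fin n → ℝ) : ℝ := ∑ p, g p (t p)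

lemma coverage {n : ℕ} (hn : 1 ≤ n) {h : ℝ} (hh : 0 < h) {t : Fin n → ℝ} (ht : t ∈ Kc n) :
    ∃ Good : Finset (Fin (2*n+1)), (n+1 ≤ Good.card) ∧
      ∀ q ∈ Good, ∃ ι ∈ idxF n h, t ∈ cube n (2*n+2) h q ι := by
  classical
  set P : Fin (2*n+1) → Prop := fun q => ∃ p : Fin n, ∃ i : ℤ, t p ∈ Gap (2*n+2) h q i with hP
  set Bad : Finset (Fin (2*n+1)) := Finset.univ.filter P with hBad
  have hq2 : ∀ q : Fin (2*n+1), (q:ℕ) + 2 ≤ 2*n+2 := fun q => by omega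
  set fb : Fin n → Fin (2*n+1) := fun p =>
    if hp : ∃ q : Fin (2*n+1), ∃ i : ℤ, t p ∈ Gap (2*n+2) h q i then hp.choose
    else ⟨0, by omega⟩ with hfb
  have hBadsub : Bad ⊆ Finset.image fb Finset.univ := by
    intro q hq
    rw [hBad, Finset.mem_filter] at hq
    obtain ⟨-, p, i, hpi⟩ := hq
    rw [Finset.mem_image]
    refine ⟨p, Finset.mem_univ _, ?_⟩
    have hp : ∃ q' : Fin (2*n+1), ∃ i : ℤ, t p ∈ Gap (2*n+2) h q' i := ⟨q, i, hpi⟩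
    rw [hfb]
    simp only [dif_pos hp]
    obtain ⟨i', hi'⟩ := hp.choose_spec
    have := (gap_unique hh (hq2 _) (hq2 _) hi' hpi).1
    exact Fin.ext this
  have hBadcard : Bad.card ≤ n := by
    calc Bad.card ≤ (Finset.image fb Finset.univ).card := Finset.card_le_card hBadsub
    _ ≤ (Finset.univ : Finset (Fin n)).card := Finset.card_image_le
    _ = n := by simp
  refine ⟨Finset.univ \ Bad, ?_, ?_⟩
  · have : (Finset.univ \ Bad).card = (Finset.univ : Finset (Fin (2*n+1))).card - Bad.card :=
      Finset.card_sdiff_of_subset (Finset.subset_univ _)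
    rw [this]
    simp only [Finset.card_univ, Fintype.card_fin]
    omega
  · intro q hqmem
    rw [Finset.mem_sdiff, hBad, Finset.mem_filter] at hqmem
    have hnotP : ¬ P q := fun hPq => hqmem.2 ⟨Finset.mem_univ _, hPq⟩
    simp only [hP] at hnotP
    push_neg at hnotP
    have hcover : ∀ p : Fin n, ∃ i : ℤ, -2 ≤ i ∧ (i:ℝ) ≤ 1/h ∧ t p ∈ Iv (2*n+2) h q (i) := by
      intro p
      have htp := ht p (Set.mem_univ p)
      exact gap_cover hh (by omega) (by omega) htp.1 htp.2 (fun i => hnotP p i)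
    choose ι hι1 hι2 hι3 using hcover
    refine ⟨ι, ?_, ?_⟩
    · rw [idxF, Fintype.mem_piFinset]
      intro p
      rw [Finset.mem_Icc]
      refine ⟨hι1 p, ?_⟩
      have := (hι2 p).trans (Int.le_ceil (1/h))
      exact_mod_cast this
    · intro p _
      exact hι3 p
structure KStage (n : ℕ) where
  g : Fin (2*n+1) → Fin n → ℝ → ℝ
  hg : ∀ q p, Continuous (g q p)
  B : ℝ
  hB : 0 < B
  scales : List (ℝ × ℝ)
  hsc : ∀ e ∈ scales, 0 < e.1 ∧ 0 < e.2
  spread : ∀ e ∈ scales, ∀ q : Fin (2*n+1), ∀ ι ∈ idxF n e.1,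
    ∀ t ∈ cube n (2*n+2) e.1 q ι ∩ Kc n, ∀ t' ∈ cube n (2*n+2) e.1 q ι ∩ Kc n,
    |yq (g q) t - yq (g q) t'| ≤ 2*n*(e.2 - B)
  sep : ∀ e ∈ scales, ∀ q : Fin (2*n+1), ∀ ι ∈ idxF n e.1, ∀ ι' ∈ idxF n e.1, ι ≠ ι' →
    ∀ t ∈ cube n (2*n+2) e.1 q ι ∩ Kc n, ∀ t' ∈ cube n (2*n+2) e.1 q ι' ∩ Kc n,
    6*n*e.2 + 4*n*B ≤ |yq (g q) t - yq (g q) t'|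


def baseStage (n : ℕ) : KStage n where
  g := fun _ _ _ => 0
  hg := fun _ _ => continuous_const
  B := 1
  hB := one_pos
  scales := []
  hsc := by simp
  spread := by simp
  sep := by simp

set_option maxHeartbeats 2000000 in
theorem kstep {n : ℕ} (hn : 1 ≤ n) (S : KStage n) (hmax : ℝ) (hpos : 0 < hmax) :
    ∃ S' : KStage n, S'.B ≤ S.B/2 ∧
      (∃ hnew : ℝ, 0 < hnew ∧ hnew ≤ hmax ∧ S'.scales = (hnew, S'.B) :: S.scales) ∧
      (∀ q p, ∀ x ∈ Set.Icc (0:ℝ) 1, |S'.g q p x - S.g q p x| ≤ S.B/2) := by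
  classical
  have tri : ∀ a b : ℝ, |a - b| ≤ |a| + |b| := fun a b => by
    rw [sub_eq_add_neg]
    refine (abs_add_le _ _).trans ?_
    rw [abs_neg]
  set Nn : ℕ := 2*n+2 with hNn
  have hNn1 : 1 ≤ Nn := by omega
  have hNnR : (0:ℝ) < (Nn:ℝ) := by positivity
  have hNnR1 : (1:ℝ) ≤ (Nn:ℝ) := by exact_mod_cast hNn1
  have huc : ∀ q : Fin (2*n+1), ∀ p : Fin n, ∃ δ, 0 < δ ∧ ∀ x ∈ Set.Icc (-1:ℝ) 2,
      ∀ y ∈ Set.Icc (-1:ℝ) 2, |x - y| < δ → |S.g q p x - S.g q p y| < S.B/4 := by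
    intro q p
    have h1 : UniformContinuousOn (S.g q p) (Set.Icc (-1:ℝ) 2) :=
      isCompact_Icc.uniformContinuousOn_of_continuous (S.hg q p).continuousOn
    rw [Metric.uniformContinuousOn_iff] at h1
    obtain ⟨δ, hδ, hδ2⟩ := h1 (S.B/4) (by have := S.hB; positivity)
    exact ⟨δ, hδ, fun x hx y hy hxy => by
      have := hδ2 x hx y hy (by rwa [Real.dist_eq]); rwa [Real.dist_eq] at this⟩
  choose δf hδf1 hδf2 using huc
  obtain ⟨δ, hδpos, hδle⟩ : ∃ δ, 0 < δ ∧ ∀ q p, δ ≤ δf q p := by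
    have hne : (Finset.univ : Finset (Fin (2*n+1) × Fin n)).Nonempty :=
      ⟨(⟨0, by omega⟩, ⟨0, by omega⟩), Finset.mem_univ _⟩
    refine ⟨Finset.univ.inf' hne (fun qp => δf qp.1 qp.2), ?_, ?_⟩
    · rw [Finset.lt_inf'_iff]
      intro qp _; exact hδf1 qp.1 qp.2
    · intro q p
      exact Finset.inf'_le _ (Finset.mem_univ (q,p))
  set m : ℝ := min hmax (min 1 δ) with hm
  have hmpos : 0 < m := lt_min hpos (lt_min one_pos hδpos)
  set h : ℝ := m / (4*Nn) with hh
  have hhpos : 0 < h := by positivity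
  have hhNm : h * Nn = m / 4 := by rw [hh]; field_simp
  have hhmax : h ≤ hmax := by
    have h1 : h ≤ m := by
      rw [hh]
      apply div_le_self hmpos.le
      linarith
    exact h1.trans (min_le_left _ _)
  have hhN1 : h * Nn ≤ 1/4 := by
    rw [hhNm]
    have : m ≤ 1 := (min_le_right _ _).trans (min_le_left _ _)
    linarith
  have hhNδ : h * Nn < δ := by
    rw [hhNm]
    have : m ≤ δ := (min_le_right _ _).trans (min_le_right _ _)
    linarith
  have hhle : h ≤ 1/4 := by nlinarith
  set T : ℤ := ⌈1/h⌉ with hT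
  have hT1 : 1 ≤ T := by
    rw [hT]
    have h1 : (1:ℝ) ≤ 1/h := by
      rw [le_div_iff₀ hhpos]; linarith
    calc (1:ℤ) = ⌈(1:ℝ)⌉ := by norm_num
    _ ≤ ⌈1/h⌉ := Int.ceil_le_ceil h1
  set W : ℕ := T.toNat + 6 with hW
  have hWpos : 0 < W := by omega
  have hWr : (1:ℝ) ≤ (W:ℝ) := by exact_mod_cast hWpos
  set Av : Fin (2*n+1) → (Fin n → ℤ) → ℝ := fun q ι => ∑ p, S.g q p (cpt Nn h q (ι p)) with hAv
  set Dv : (Fin n → ℤ) → ℝ := fun ι => ∑ p : Fin n, (W:ℝ)^(p:ℕ) * ((ι p:ℝ) + 3) with hDv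
  have hidx_mem : ∀ ι ∈ idxF n h, ∀ p : Fin n, -2 ≤ ι p ∧ ι p ≤ T := by
    intro ι hι p
    rw [idxF, Fintype.mem_piFinset] at hι
    have := hι p
    rw [Finset.mem_Icc] at this
    exact this
  have hDinj : ∀ ι ∈ idxF n h, ∀ ι' ∈ idxF n h, ι ≠ ι' → Dv ι ≠ Dv ι' := by
    intro ι hι ι' hι' hne heq
    apply hne
    have hcast : ∀ (κ : Fin n → ℤ), (∀ p, -2 ≤ κ p ∧ κ p ≤ T) →
        Dv κ = ((∑ p : Fin n, (κ p + 3).toNat * W ^ (p:ℕ) : ℕ) : ℝ) := by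
      intro κ hκ
      simp only [hDv]
      push_cast
      apply Finset.sum_congr rfl
      intro p _
      have h3 : (0:ℤ) ≤ κ p + 3 := by have := (hκ p).1; omega
      have h4 : (((κ p + 3).toNat : ℤ) : ℝ) = ((κ p : ℝ) + 3) := by
        rw [Int.toNat_of_nonneg h3]; push_cast; ring
      rw [← h4]; push_cast; ring
    have hsum : (∑ p : Fin n, (ι p + 3).toNat * W ^ (p:ℕ))
        = (∑ p : Fin n, (ι' p + 3).toNat * W ^ (p:ℕ)) := by
      have h1 := hcast ι (hidx_mem ι hι)
      have h2 := hcast ι' (hidx_mem ι' hι')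
      rw [h1, h2] at heq
      exact_mod_cast heq
    have hdW : ∀ p : Fin n, (ι p + 3).toNat < W := by
      intro p
      have h1 := (hidx_mem ι hι p).2
      simp only [hW]
      omega
    have heW : ∀ p : Fin n, (ι' p + 3).toNat < W := by
      intro p
      have h1 := (hidx_mem ι' hι' p).2
      simp only [hW]
      omega
    have hde := digit_inj hWpos (fun p => (ι p + 3).toNat) (fun p => (ι' p + 3).toNat)
      hdW heW hsum
    funext p
    have hp := congrFun hde p
    have h3 : (0:ℤ) ≤ ι p + 3 := by have := (hidx_mem ι hι p).1; omega
    have h3' : (0:ℤ) ≤ ι' p + 3 := by have := (hidx_mem ι' hι' p).1; omega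
    omega
  set pairs : Finset ((Fin n → ℤ) × (Fin n → ℤ)) :=
    ((idxF n h) ×ˢ (idxF n h)).filter (fun z => z.1 ≠ z.2) with hpairs
  set badset : Finset ℝ := (Finset.univ ×ˢ pairs).image
    (fun z : Fin (2*n+1) × ((Fin n → ℤ) × (Fin n → ℤ)) =>
      (Av z.1 z.2.2 - Av z.1 z.2.1)/(Dv z.2.1 - Dv z.2.2)) with hbadset
  set Emax : ℝ := (W:ℝ)^n * ((T:ℝ) + 5) with hEmax
  have hTr1 : (1:ℝ) ≤ (T:ℝ) := by exact_mod_cast hT1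
  have hEmaxpos : 0 < Emax := by
    rw [hEmax]
    have : (0:ℝ) < (T:ℝ) + 5 := by linarith
    positivity
  set ε₀ : ℝ := S.B/(4*Emax + 1) with hε₀
  have hε₀pos : 0 < ε₀ := by
    rw [hε₀]; have := S.hB; positivity
  obtain ⟨ε, hεmem⟩ : ∃ ε, ε ∈ Set.Ioo 0 ε₀ \ ↑badset :=
    ((Set.Ioo_infinite hε₀pos).diff (badset.finite_toSet)).nonempty
  obtain ⟨⟨hε1, hε2⟩, hεbad⟩ := hεmem
  set clampf : ℝ → ℝ := fun v => max (-2) (min (T:ℝ) v) with hclampf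
  set g' : Fin (2*n+1) → Fin n → ℝ → ℝ := fun q p x =>
    S.g q p (ret Nn h q x) + ε * (W:ℝ)^(p:ℕ) * (clampf ((ret Nn h q x - h*q)/(h*Nn) - 1) + 3)
    with hg'
  have hg'cont : ∀ q p, Continuous (g' q p) := by
    intro q p
    simp only [hg', hclampf]
    apply Continuous.add
    · exact (S.hg q p).comp (ret_cont hNn1)
    · apply Continuous.mul continuous_const
      apply Continuous.add ?_ continuous_const
      apply Continuous.max continuous_const
      apply Continuous.min continuous_const
      exact (((ret_cont hNn1).sub continuous_const).div_const _).sub continuous_const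
  have hconst : ∀ (q : Fin (2*n+1)) p (i : ℤ), -2 ≤ i → i ≤ T → ∀ x ∈ Iv Nn h (q:ℕ) i,
      g' q p x = S.g q p (cpt Nn h (q:ℕ) i) + ε * (W:ℝ)^(p:ℕ) * ((i:ℝ) + 3) := by
    intro q p i hi1 hi2 x hx
    simp only [hg', hclampf]
    rw [ret_const hNn1 hhpos hx]
    have hhNne : (h*(Nn:ℝ)) ≠ 0 := by positivity
    have harg : (cpt Nn h (q:ℕ) i - h*(q:ℕ))/(h*(Nn:ℝ)) - 1 = (i:ℝ) := by
      rw [cpt]; field_simp; ring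
    rw [harg]
    have h1 : (-2:ℝ) ≤ (i:ℝ) := by exact_mod_cast hi1
    have h2 : (i:ℝ) ≤ (T:ℝ) := by exact_mod_cast hi2
    rw [min_eq_right h2, max_eq_right h1]
  set Vv : Fin (2*n+1) → (Fin n → ℤ) → ℝ := fun q ι => Av q ι + ε * Dv ι with hVv
  have hVconst : ∀ (q : Fin (2*n+1)), ∀ ι ∈ idxF n h, ∀ t ∈ cube n Nn h (q:ℕ) ι,
      yq (g' q) t = Vv q ι := by
    intro q ι hι t ht
    simp only [yq, hVv, hAv, hDv]
    rw [Finset.mul_sum, ← Finset.sum_add_distrib]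
    apply Finset.sum_congr rfl
    intro p _
    have hmem := ht p (Set.mem_univ p)
    have hcc := hconst q p (ι p) (hidx_mem ι hι p).1 (hidx_mem ι hι p).2 (t p) hmem
    rw [hcc]; ring
  have hm2 : (fun _ : Fin n => (-2:ℤ)) ∈ idxF n h := by
    rw [idxF, Fintype.mem_piFinset]
    intro p
    rw [Finset.mem_Icc]
    omega
  have hm1 : (fun _ : Fin n => (-1:ℤ)) ∈ idxF n h := by
    rw [idxF, Fintype.mem_piFinset]
    intro p
    rw [Finset.mem_Icc]
    omega
  have hne12 : (fun _ : Fin n => (-2:ℤ)) ≠ (fun _ : Fin n => (-1:ℤ)) := by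
    intro hcon
    have := congrFun hcon ⟨0, by omega⟩
    simp at this
  have hpairs_ne : ((Finset.univ : Finset (Fin (2*n+1))) ×ˢ pairs).Nonempty := by
    refine ⟨(⟨0, by omega⟩, ((fun _ => -2), (fun _ => -1))), ?_⟩
    rw [Finset.mem_product]
    refine ⟨Finset.mem_univ _, ?_⟩
    rw [hpairs, Finset.mem_filter, Finset.mem_product]
    exact ⟨⟨hm2, hm1⟩, hne12⟩
  set μ : ℝ := (Finset.univ ×ˢ pairs).inf' hpairs_ne
    (fun z => |Vv z.1 z.2.1 - Vv z.1 z.2.2|) with hμ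
  have hμpos : 0 < μ := by
    rw [hμ, Finset.lt_inf'_iff]
    rintro ⟨q, ι, ι'⟩ hz
    rw [Finset.mem_product] at hz
    have hz2 := hz.2
    rw [hpairs, Finset.mem_filter, Finset.mem_product] at hz2
    obtain ⟨⟨hι, hι'⟩, hne⟩ := hz2
    rw [abs_pos]
    intro hcon
    have hDne : Dv ι - Dv ι' ≠ 0 := sub_ne_zero.2 (hDinj ι hι ι' hι' hne)
    have hεval : ε = (Av q ι' - Av q ι)/(Dv ι - Dv ι') := by
      rw [eq_div_iff hDne]
      simp only [hVv] at hcon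
      linear_combination hcon
    apply hεbad
    rw [hbadset]
    simp only [Finset.coe_image, Set.mem_image, Finset.mem_coe]
    refine ⟨(q, ι, ι'), ?_, hεval.symm⟩
    rw [Finset.mem_product]
    refine ⟨Finset.mem_univ _, ?_⟩
    rw [hpairs, Finset.mem_filter, Finset.mem_product]
    exact ⟨⟨hι, hι'⟩, hne⟩
  set B' : ℝ := min (S.B/2) (μ/(10*n+1)) with hB'
  have hB'pos : 0 < B' := by
    rw [hB']
    apply lt_min (by have := S.hB; positivity)
    positivity
  have hB'le : B' ≤ S.B/2 := min_le_left _ _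
  have hdrift : ∀ q p, ∀ x ∈ Set.Icc (0:ℝ) 1, |g' q p x - S.g q p x| ≤ S.B/2 := by
    intro q p x hx
    have hretd := ret_dist (q := (q:ℕ)) hNn1 hhpos x
    have hxmem : x ∈ Set.Icc (-1:ℝ) 2 := ⟨by linarith [hx.1], by linarith [hx.2]⟩
    have hrmem : ret Nn h (q:ℕ) x ∈ Set.Icc (-1:ℝ) 2 := by
      rw [abs_le] at hretd
      constructor
      · have := hretd.1; have := hx.1; nlinarith
      · have := hretd.2; have := hx.2; nlinarith
    have hg1 : |S.g q p (ret Nn h (q:ℕ) x) - S.g q p x| < S.B/4 := by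
      apply hδf2 q p _ hrmem _ hxmem
      calc |ret Nn h (q:ℕ) x - x| ≤ h * Nn := hretd
      _ < δ := hhNδ
      _ ≤ δf q p := hδle q p
    have hclampb : ∀ v : ℝ, -2 ≤ clampf v ∧ clampf v ≤ (T:ℝ) := by
      intro v
      simp only [hclampf]
      refine ⟨le_max_left _ _, max_le (by linarith) (min_le_left _ _)⟩
    have hg2 : |ε * (W:ℝ)^(p:ℕ) * (clampf ((ret Nn h (q:ℕ) x - h*(q:ℕ))/(h*(Nn:ℝ)) - 1) + 3)|
        ≤ S.B/4 := by
      set v := (ret Nn h (q:ℕ) x - h*(q:ℕ))/(h*(Nn:ℝ)) - 1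
      have hc := hclampb v
      have hWp : (W:ℝ)^(p:ℕ) ≤ (W:ℝ)^n := pow_le_pow_right₀ hWr (by omega)
      have hWp0 : (0:ℝ) < (W:ℝ)^(p:ℕ) := by positivity
      have habs : |clampf v + 3| ≤ (T:ℝ) + 5 := by
        rw [abs_le]
        exact ⟨by linarith [hc.1], by linarith [hc.2]⟩
      rw [abs_mul, abs_mul, abs_of_pos hε1, abs_of_pos hWp0]
      have h2 : (W:ℝ)^(p:ℕ) * |clampf v + 3| ≤ (W:ℝ)^n * ((T:ℝ) + 5) :=
        mul_le_mul hWp habs (abs_nonneg _) (by positivity)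
      have h1 : ε * ((W:ℝ)^(p:ℕ) * |clampf v + 3|) ≤ ε * Emax := by
        rw [hEmax]; nlinarith
      have h3 : ε * Emax ≤ S.B/4 := by
        have h5 : ε * (4*Emax+1) < S.B := by
          rw [← lt_div_iff₀ (by positivity)]
          exact hε2
        nlinarith
      calc ε * (W:ℝ)^(p:ℕ) * |clampf v + 3| = ε * ((W:ℝ)^(p:ℕ) * |clampf v + 3|) := by ring
      _ ≤ ε * Emax := h1
      _ ≤ S.B/4 := h3
    have heq : g' q p x - S.g q p x = (S.g q p (ret Nn h (q:ℕ) x) - S.g q p x) +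
        ε * (W:ℝ)^(p:ℕ) * (clampf ((ret Nn h (q:ℕ) x - h*(q:ℕ))/(h*(Nn:ℝ)) - 1) + 3) := by
      simp only [hg']; ring
    rw [heq]
    calc |_| ≤ |S.g q p (ret Nn h (q:ℕ) x) - S.g q p x| +
        |ε * (W:ℝ)^(p:ℕ) * (clampf ((ret Nn h (q:ℕ) x - h*(q:ℕ))/(h*(Nn:ℝ)) - 1) + 3)| :=
      abs_add_le _ _
    _ ≤ S.B/4 + S.B/4 := by linarith
    _ = S.B/2 := by ring
  have hydrift : ∀ (q : Fin (2*n+1)), ∀ t ∈ Kc n,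
      |yq (g' q) t - yq (S.g q) t| ≤ n * (S.B/2) := by
    intro q t ht
    rw [yq, yq, ← Finset.sum_sub_distrib]
    calc |∑ p : Fin n, (g' q p (t p) - S.g q p (t p))|
        ≤ ∑ p : Fin n, |g' q p (t p) - S.g q p (t p)| := Finset.abs_sum_le_sum_abs _ _
    _ ≤ ∑ _p : Fin n, S.B/2 := by
        apply Finset.sum_le_sum
        intro p _
        exact hdrift q p (t p) (ht p (Set.mem_univ p))
    _ = n * (S.B/2) := by rw [Finset.sum_const]; simp [mul_comm]
  refine ⟨⟨g', hg'cont, B', hB'pos, (h, B') :: S.scales, ?_, ?_, ?_⟩, hB'le,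
    ⟨h, hhpos, hhmax, rfl⟩, hdrift⟩
  · intro e he
    rcases List.mem_cons.1 he with rfl | he'
    · exact ⟨hhpos, hB'pos⟩
    · exact S.hsc e he'
  · -- spread
    intro e he q ι hι t ht t' ht'
    rcases List.mem_cons.1 he with rfl | he'
    · have h1 := hVconst q ι hι t ht.1
      have h2 := hVconst q ι hι t' ht'.1
      rw [h1, h2, sub_self, abs_zero]
      simp
    · have hold := S.spread e he' q ι hι t ht t' ht'
      have hd1 := hydrift q t ht.2
      have hd2 := hydrift q t' ht'.2
      have e1 : yq (g' q) t - yq (g' q) t' = (yq (S.g q) t - yq (S.g q) t') +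
          ((yq (g' q) t - yq (S.g q) t) - (yq (g' q) t' - yq (S.g q) t')) := by ring
      have h6 : |yq (g' q) t - yq (g' q) t'| ≤ |yq (S.g q) t - yq (S.g q) t'| +
          (|yq (g' q) t - yq (S.g q) t| + |yq (g' q) t' - yq (S.g q) t'|) := by
        rw [e1]
        refine (abs_add_le _ _).trans ?_
        gcongr
        exact tri _ _
      have h2B : 2*B' ≤ S.B := by linarith
      have hn0 : (0:ℝ) ≤ (n:ℝ) := by positivity
      have harith : 2*(n:ℝ)*(e.2 - S.B) + n*(S.B/2) + n*(S.B/2) ≤ 2*n*(e.2 - B') := by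
        nlinarith
      linarith
  · -- sep
    intro e he q ι hι ι' hι' hne t ht t' ht'
    rcases List.mem_cons.1 he with rfl | he'
    · have h1 := hVconst q ι hι t ht.1
      have h2 := hVconst q ι' hι' t' ht'.1
      rw [h1, h2]
      have hmemz : (q, (ι, ι')) ∈ (Finset.univ : Finset (Fin (2*n+1))) ×ˢ pairs := by
        rw [Finset.mem_product]
        refine ⟨Finset.mem_univ _, ?_⟩
        rw [hpairs, Finset.mem_filter, Finset.mem_product]
        exact ⟨⟨hι, hι'⟩, hne⟩
      have hinf : μ ≤ |Vv q ι - Vv q ι'| := by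
        have h9 := Finset.inf'_le
          (fun z : Fin (2*n+1) × ((Fin n → ℤ) × (Fin n → ℤ)) => |Vv z.1 z.2.1 - Vv z.1 z.2.2|)
          hmemz
        simp only at h9
        rw [hμ]
        exact h9
      have hμB : (10*(n:ℝ)+1) * B' ≤ μ := by
        have hmin : B' ≤ μ/(10*(n:ℝ)+1) := min_le_right _ _
        rw [le_div_iff₀ (by positivity)] at hmin
        linarith
      have hn0 : (0:ℝ) ≤ (n:ℝ) := by positivity
      have h7 : 6*(n:ℝ)*B' + 4*n*B' ≤ (10*n+1)*B' := by nlinarith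
      linarith
    · have hold := S.sep e he' q ι hι ι' hι' hne t ht t' ht'
      have hd1 := hydrift q t ht.2
      have hd2 := hydrift q t' ht'.2
      have e2 : yq (S.g q) t - yq (S.g q) t' = (yq (g' q) t - yq (g' q) t') -
          ((yq (g' q) t - yq (S.g q) t) - (yq (g' q) t' - yq (S.g q) t')) := by ring
      have h6 : |yq (S.g q) t - yq (S.g q) t'| ≤ |yq (g' q) t - yq (g' q) t'| +
          (|yq (g' q) t - yq (S.g q) t| + |yq (g' q) t' - yq (S.g q) t'|) := by
        rw [e2]
        refine (tri _ _).trans ?_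
        gcongr
        exact tri _ _
      have h2B : 2*B' ≤ S.B := by linarith
      have hn0 : (0:ℝ) ≤ (n:ℝ) := by positivity
      nlinarith [hold, h6, hd1, hd2]
section Stages

variable {n : ℕ} (hn : 1 ≤ n)

noncomputable def stages (hn : 1 ≤ n) : ℕ → KStage n
  | 0 => baseStage n
  | (k+1) => (kstep hn (stages hn k) ((1/2)^(k+1)) (by positivity)).choose

lemma stages_spec (k : ℕ) :
    (stages hn (k+1)).B ≤ (stages hn k).B/2 ∧
    (∃ hnew : ℝ, 0 < hnew ∧ hnew ≤ (1/2)^(k+1) ∧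
      (stages hn (k+1)).scales = (hnew, (stages hn (k+1)).B) :: (stages hn k).scales) ∧
    (∀ q p, ∀ x ∈ Set.Icc (0:ℝ) 1,
      |(stages hn (k+1)).g q p x - (stages hn k).g q p x| ≤ (stages hn k).B/2) := by
  have := (kstep hn (stages hn k) ((1/2)^(k+1)) (by positivity)).choose_spec
  exact this

lemma stages_B_le (k : ℕ) : (stages hn k).B ≤ (1/2)^k := by
  induction k with
  | zero => simp [stages, baseStage]
  | succ k ih =>
    have h1 := (stages_spec hn k).1
    have : (1/2:ℝ)^(k+1) = (1/2)^k/2 := by rw [pow_succ]; ring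
    rw [this]
    linarith

lemma stages_drift (k : ℕ) : ∀ q p, ∀ x ∈ Set.Icc (0:ℝ) 1,
    |(stages hn (k+1)).g q p x - (stages hn k).g q p x| ≤ (1/2)^(k+1) := by
  intro q p x hx
  have h1 := (stages_spec hn k).2.2 q p x hx
  have h2 := stages_B_le hn k
  have : (1/2:ℝ)^(k+1) = (1/2)^k/2 := by rw [pow_succ]; ring
  rw [this]
  linarith

lemma stages_scales_mono {e : ℝ × ℝ} {k : ℕ} (hk : e ∈ (stages hn k).scales) :
    ∀ m, k ≤ m → e ∈ (stages hn m).scales := by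
  intro m hm
  induction m with
  | zero =>
    have : k = 0 := by omega
    rwa [this] at hk
  | succ m ih =>
    rcases Nat.lt_or_ge k (m+1) with hlt | hge
    · have := ih (by omega)
      obtain ⟨hnew, -, -, hsc⟩ := (stages_spec hn m).2.1
      rw [hsc]
      exact List.mem_cons_of_mem _ this
    · have : k = m + 1 := by omega
      rwa [this] at hk

noncomputable def gl (hn : 1 ≤ n) (q : Fin (2*n+1)) (p : Fin n) : ℝ → ℝ :=
  fun x => ∑' k, ((stages hn (k+1)).g q p x - (stages hn k).g q p x)

lemma summable_u : Summable (fun k : ℕ => (1/2:ℝ)^(k+1)) := by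
  have h : (fun k : ℕ => (1/2:ℝ)^(k+1)) = fun k => (1/2:ℝ)^k * (1/2) := by
    funext k; rw [pow_succ]
  rw [h]
  exact summable_geometric_two.mul_right _

lemma gl_contOn (q : Fin (2*n+1)) (p : Fin n) :
    ContinuousOn (gl hn q p) (Set.Icc (0:ℝ) 1) := by
  apply continuousOn_tsum
    (fun k => (((stages hn (k+1)).hg q p).sub ((stages hn k).hg q p)).continuousOn)
    summable_u
  intro k x hx
  rw [Real.norm_eq_abs]
  exact stages_drift hn k q p x hx

lemma gl_tendsto (q : Fin (2*n+1)) (p : Fin n) {x : ℝ} (hx : x ∈ Set.Icc (0:ℝ) 1) :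
    Filter.Tendsto (fun k => (stages hn k).g q p x) Filter.atTop (nhds (gl hn q p x)) := by
  have hsum : Summable (fun k => (stages hn (k+1)).g q p x - (stages hn k).g q p x) := by
    apply Summable.of_norm_bounded summable_u
    intro k
    rw [Real.norm_eq_abs]
    exact stages_drift hn k q p x hx
  have h1 := hsum.hasSum.tendsto_sum_nat
  have h2 : ∀ K : ℕ, (∑ k ∈ Finset.range K,
      ((stages hn (k+1)).g q p x - (stages hn k).g q p x)) = (stages hn K).g q p x := by
    intro K
    rw [Finset.sum_range_sub (fun k => (stages hn k).g q p x)]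
    simp [stages, baseStage]
  rw [show (fun K => ∑ k ∈ Finset.range K,
      ((stages hn (k+1)).g q p x - (stages hn k).g q p x)) = fun K => (stages hn K).g q p x
    from funext h2] at h1
  exact h1

noncomputable def ygl (hn : 1 ≤ n) (q : Fin (2*n+1)) (t : Fin n → ℝ) : ℝ :=
  ∑ p, gl hn q p (t p)

lemma ygl_tendsto (q : Fin (2*n+1)) {t : Fin n → ℝ} (ht : t ∈ Kc n) :
    Filter.Tendsto (fun k => yq ((stages hn k).g q) t) Filter.atTop (nhds (ygl hn q t)) := by
  apply tendsto_finset_sum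
  intro p _
  exact gl_tendsto hn q p (ht p (Set.mem_univ p))

lemma star (δ : ℝ) (hδ : 0 < δ) :
    ∃ h γ : ℝ, 0 < h ∧ h * (2*(n:ℝ)+2) < δ ∧ 0 < γ ∧
    (∀ q : Fin (2*n+1), ∀ ι ∈ idxF n h,
      ∀ t ∈ cube n (2*n+2) h q ι ∩ Kc n, ∀ t' ∈ cube n (2*n+2) h q ι ∩ Kc n,
      |ygl hn q t - ygl hn q t'| ≤ γ) ∧
    (∀ q : Fin (2*n+1), ∀ ι ∈ idxF n h, ∀ ι' ∈ idxF n h, ι ≠ ι' →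
      ∀ t ∈ cube n (2*n+2) h q ι ∩ Kc n, ∀ t' ∈ cube n (2*n+2) h q ι' ∩ Kc n,
      3*γ ≤ |ygl hn q t - ygl hn q t'|) := by
  have h2n2 : (0:ℝ) < 2*(n:ℝ)+2 := by positivity
  obtain ⟨k0, hk0⟩ : ∃ k0 : ℕ, (1/2:ℝ)^k0 < δ/(2*(n:ℝ)+2) := by
    apply exists_pow_lt_of_lt_one (by positivity)
    norm_num
  obtain ⟨hnew, hnewpos, hnewle, hsc⟩ := (stages_spec hn k0).2.1
  set K := k0 + 1 with hK
  set e : ℝ × ℝ := (hnew, (stages hn K).B) with he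
  have hemem : ∀ m, K ≤ m → e ∈ (stages hn m).scales := by
    intro m hm
    apply stages_scales_mono hn _ m hm
    rw [hsc]
    exact List.mem_cons_self
  refine ⟨hnew, 2*(n:ℝ)*(stages hn K).B, hnewpos, ?_, ?_, ?_, ?_⟩
  · have s1 : hnew * (2*(n:ℝ)+2) ≤ (1/2)^K * (2*(n:ℝ)+2) :=
      mul_le_mul_of_nonneg_right hnewle h2n2.le
    have s2 : ((1/2:ℝ))^K ≤ (1/2)^k0 := by
      apply pow_le_pow_of_le_one (by norm_num) (by norm_num)
      omega
    have s3 : (1/2:ℝ)^K * (2*(n:ℝ)+2) ≤ (1/2)^k0 * (2*(n:ℝ)+2) :=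
      mul_le_mul_of_nonneg_right s2 h2n2.le
    have s4 : (1/2:ℝ)^k0 * (2*(n:ℝ)+2) < (δ/(2*(n:ℝ)+2)) * (2*(n:ℝ)+2) :=
      mul_lt_mul_of_pos_right hk0 h2n2
    have s5 : (δ/(2*(n:ℝ)+2)) * (2*(n:ℝ)+2) = δ := by field_simp
    linarith
  · have := (stages hn K).hB
    have hn1 : (1:ℝ) ≤ (n:ℝ) := by exact_mod_cast hn
    positivity
  · intro q ι hι t ht t' ht'
    have htend := ((ygl_tendsto hn q ht.2).sub (ygl_tendsto hn q ht'.2)).abs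
    apply le_of_tendsto htend
    rw [Filter.eventually_atTop]
    refine ⟨K, fun m hm => ?_⟩
    have hsp := (stages hn m).spread e (hemem m hm) q ι hι t ht t' ht'
    have hBm := (stages hn m).hB
    have hn0 : (0:ℝ) ≤ (n:ℝ) := by positivity
    have h9 : 2*(n:ℝ)*(e.2 - (stages hn m).B) ≤ 2*(n:ℝ)*e.2 := by nlinarith
    have h10 : e.2 = (stages hn K).B := by rw [he]
    rw [h10] at h9
    linarith
  · intro q ι hι ι' hι' hne t ht t' ht'
    have htend := ((ygl_tendsto hn q ht.2).sub (ygl_tendsto hn q ht'.2)).abs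
    apply ge_of_tendsto htend
    rw [Filter.eventually_atTop]
    refine ⟨K, fun m hm => ?_⟩
    have hsp := (stages hn m).sep e (hemem m hm) q ι hι ι' hι' hne t ht t' ht'
    have hBm := (stages hn m).hB
    have hn0 : (0:ℝ) ≤ (n:ℝ) := by positivity
    have h1 : 3*(2*(n:ℝ)*(stages hn K).B) ≤ 6*(n:ℝ)*e.2 + 4*(n:ℝ)*(stages hn m).B := by
      rw [he]
      nlinarith
    linarith
end Stages
noncomputable def bump (a b d x : ℝ) : ℝ := max 0 (min 1 (1 - (max (a - x) (x - b))/d))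

lemma bump_cont (a b d : ℝ) : Continuous (bump a b d) := by
  apply continuous_const.max
  apply continuous_const.min
  apply Continuous.sub continuous_const
  exact ((continuous_const.sub continuous_id).max (continuous_id.sub continuous_const)).div_const _

lemma bump_one {a b d x : ℝ} (hd : 0 < d) (h1 : a ≤ x) (h2 : x ≤ b) : bump a b d x = 1 := by
  unfold bump
  have hm : max (a - x) (x - b) ≤ 0 := max_le (by linarith) (by linarith)
  have hdd : (max (a - x) (x - b))/d ≤ 0 := div_nonpos_iff.2 (Or.inr ⟨hm, hd.le⟩)
  rw [min_eq_left (by linarith), max_eq_right (by norm_num)]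

lemma bump_zero {a b d x : ℝ} (hd : 0 < d) (hm : d ≤ max (a - x) (x - b)) : bump a b d x = 0 := by
  unfold bump
  have hdd : (1:ℝ) ≤ (max (a - x) (x - b))/d := (one_le_div hd).2 hm
  rw [max_eq_left]
  exact (min_le_right _ _).trans (by linarith)

lemma bump_mem (a b d x : ℝ) : 0 ≤ bump a b d x ∧ bump a b d x ≤ 1 :=
  ⟨le_max_left _ _, max_le (by norm_num) (min_le_left _ _)⟩


lemma Kc_compact (n : ℕ) : IsCompact (Kc n) := isCompact_univ_pi fun _ => isCompact_Icc

instance KcCS (n : ℕ) : CompactSpace (Kc n) := isCompact_iff_compactSpace.1 (Kc_compact n)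

lemma cube_closed (n N : ℕ) (h : ℝ) (q : ℕ) (ι : Fin n → ℤ) :
    IsClosed (cube n N h q ι) := isClosed_set_pi fun p _ => isClosed_Icc

set_option maxHeartbeats 1000000 in
theorem outer_step {n : ℕ} (hn : 1 ≤ n) (Y : Fin (2*n+1) → (Fin n → ℝ) → ℝ)
    (hYcont : ∀ q, ContinuousOn (Y q) (Kc n))
    (hstar : ∀ δ : ℝ, 0 < δ → ∃ h γ : ℝ, 0 < h ∧ h * (2*(n:ℝ)+2) < δ ∧ 0 < γ ∧
      (∀ q : Fin (2*n+1), ∀ ι ∈ idxF n h,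
        ∀ t ∈ cube n (2*n+2) h q ι ∩ Kc n, ∀ t' ∈ cube n (2*n+2) h q ι ∩ Kc n,
        |Y q t - Y q t'| ≤ γ) ∧
      (∀ q : Fin (2*n+1), ∀ ι ∈ idxF n h, ∀ ι' ∈ idxF n h, ι ≠ ι' →
        ∀ t ∈ cube n (2*n+2) h q ι ∩ Kc n, ∀ t' ∈ cube n (2*n+2) h q ι' ∩ Kc n,
        3*γ ≤ |Y q t - Y q t'|))
    (φ : C(↥(Kc n), ℝ)) :
    ∃ G : Fin (2*n+1) → ℝ → ℝ, (∀ q, Continuous (G q)) ∧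
      (∀ q x, |G q x| ≤ ‖φ‖/((n:ℝ)+1)) ∧
      (∀ t : ↥(Kc n), |φ t - ∑ q, G q (Y q t.1)| ≤ (2*(n:ℝ)+1)/(2*(n:ℝ)+2) * ‖φ‖) := by
  classical
  have tri : ∀ a b : ℝ, |a - b| ≤ |a| + |b| := fun a b => by
    rw [sub_eq_add_neg]
    refine (abs_add_le _ _).trans ?_
    rw [abs_neg]
  have hn1 : (1:ℝ) ≤ (n:ℝ) := by exact_mod_cast hn
  have hd1 : (0:ℝ) < (n:ℝ)+1 := by linarith
  have hφb : ∀ z : ↥(Kc n), |φ z| ≤ ‖φ‖ := fun z => by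
    have := φ.norm_coe_le_norm z
    rwa [Real.norm_eq_abs] at this
  rcases eq_or_ne ‖φ‖ 0 with hzero | hne
  · refine ⟨fun _ _ => 0, fun q => continuous_const, fun q x => ?_, fun t => ?_⟩
    · rw [abs_zero, hzero]
      positivity
    · have h1 := hφb t
      rw [hzero] at h1
      simp only [Finset.sum_const_zero, sub_zero]
      rw [hzero, mul_zero]
      exact h1
  · have hφpos : 0 < ‖φ‖ := (norm_nonneg φ).lt_of_ne (Ne.symm hne)
    set V : ℝ := ‖φ‖/((n:ℝ)+1) with hVdef
    have hVpos : 0 < V := by positivity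
    set η : ℝ := ‖φ‖/(2*(2*(n:ℝ)+1)) with hηdef
    have hηpos : 0 < η := by positivity
    have hUC := CompactSpace.uniformContinuous_of_continuous φ.continuous
    rw [Metric.uniformContinuous_iff] at hUC
    obtain ⟨δ, hδpos, hδ⟩ := hUC η hηpos
    obtain ⟨h, γ, hh, hhδ, hγ, hsprd, hsep⟩ := hstar δ hδpos
    set Nr : ℕ := 2*n+2 with hNr
    set Cs : Fin (2*n+1) → Finset (Fin n → ℤ) := fun q =>
      (idxF n h).filter (fun ι => (cube n Nr h q ι ∩ Kc n).Nonempty) with hCs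
    have hCsidx : ∀ q, ∀ ι ∈ Cs q, ι ∈ idxF n h := by
      intro q ι hι
      simp only [hCs, Finset.mem_filter] at hι
      exact hι.1
    have hCsne : ∀ q, ∀ ι ∈ Cs q, (cube n Nr h q ι ∩ Kc n).Nonempty := by
      intro q ι hι
      simp only [hCs, Finset.mem_filter] at hι
      exact hι.2
    -- choose a point of each nonempty little cube
    have hwex : ∀ (q : Fin (2*n+1)) (ι : Fin n → ℤ), ∃ wpt : ↥(Kc n),
        ι ∈ Cs q → (wpt : Fin n → ℝ) ∈ cube n Nr h q ι ∩ Kc n := by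
      intro q ι
      by_cases hι : ι ∈ Cs q
      · obtain ⟨z, hz⟩ := hCsne q ι hι
        exact ⟨⟨z, hz.2⟩, fun _ => hz⟩
      · exact ⟨⟨fun _ => 0, by
          intro p _
          exact ⟨le_rfl, zero_le_one⟩⟩, fun hc => absurd hc hι⟩
    choose w hwmem using hwex
    -- interval endpoints of the image of each little cube
    have habex : ∀ (q : Fin (2*n+1)) (ι : Fin n → ℤ), ∃ a b : ℝ,
        (ι ∈ Cs q → (∃ ta ∈ cube n Nr h q ι ∩ Kc n, Y q ta = a) ∧
          (∃ tb ∈ cube n Nr h q ι ∩ Kc n, Y q tb = b)) ∧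
        (∀ t ∈ cube n Nr h q ι ∩ Kc n, a ≤ Y q t ∧ Y q t ≤ b) := by
      intro q ι
      have hcomp : IsCompact (Y q '' (cube n Nr h q ι ∩ Kc n)) := by
        apply IsCompact.image_of_continuousOn
        · exact (Kc_compact n).inter_left (cube_closed n Nr h q ι)
        · exact (hYcont q).mono Set.inter_subset_right
      refine ⟨sInf (Y q '' (cube n Nr h q ι ∩ Kc n)),
        sSup (Y q '' (cube n Nr h q ι ∩ Kc n)), ?_, ?_⟩
      · intro hι
        have hne' : (Y q '' (cube n Nr h q ι ∩ Kc n)).Nonempty :=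
          (hCsne q ι hι).image _
        constructor
        · obtain ⟨z, hz, hz2⟩ := hcomp.sInf_mem hne'
          exact ⟨z, hz, hz2⟩
        · obtain ⟨z, hz, hz2⟩ := hcomp.sSup_mem hne'
          exact ⟨z, hz, hz2⟩
      · intro t ht
        exact ⟨csInf_le hcomp.bddBelow (Set.mem_image_of_mem _ ht),
          le_csSup hcomp.bddAbove (Set.mem_image_of_mem _ ht)⟩
    choose aI bI habmem habbd using habex
    -- the values
    set v : Fin (2*n+1) → (Fin n → ℤ) → ℝ := fun q ι => φ (w q ι) / ((n:ℝ)+1) with hv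
    have hvb : ∀ q ι, |v q ι| ≤ V := by
      intro q ι
      simp only [hv]
      rw [abs_div, abs_of_pos hd1, hVdef]
      gcongr
      exact hφb _
    -- the outer functions
    set G : Fin (2*n+1) → ℝ → ℝ := fun q x =>
      max (-V) (min V (∑ ι ∈ Cs q, v q ι * bump (aI q ι) (bI q ι) (γ/2) x)) with hG
    have hGcont : ∀ q, Continuous (G q) := by
      intro q
      simp only [hG]
      apply continuous_const.max
      apply continuous_const.min
      apply continuous_finset_sum
      intro ι _
      exact continuous_const.mul (bump_cont _ _ _)
    have hGb : ∀ q x, |G q x| ≤ V := by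
      intro q x
      simp only [hG]
      rw [abs_le]
      refine ⟨le_max_left _ _, max_le (by linarith) (min_le_left _ _)⟩
    have hGeval : ∀ q, ∀ ι ∈ Cs q, ∀ t ∈ cube n Nr h q ι ∩ Kc n,
        G q (Y q t) = v q ι := by
      intro q ι hι t ht
      have hab := habbd q ι t ht
      have hsum : (∑ ι' ∈ Cs q, v q ι' * bump (aI q ι') (bI q ι') (γ/2) (Y q t)) = v q ι := by
        rw [Finset.sum_eq_single ι]
        · rw [bump_one (by positivity) hab.1 hab.2, mul_one]
        · intro ι' hι' hne'
          have hz : bump (aI q ι') (bI q ι') (γ/2) (Y q t) = 0 := by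
            obtain ⟨⟨ta, hta, hYta⟩, ⟨tb, htb, hYtb⟩⟩ := habmem q ι' hι'
            have hs1 := hsep q ι' (hCsidx q ι' hι') ι (hCsidx q ι hι) hne' ta hta t ht
            have hsp := hsprd q ι' (hCsidx q ι' hι') ta hta tb htb
            rw [hYta] at hs1
            rw [hYta, hYtb] at hsp
            apply bump_zero (by positivity)
            rcases le_or_gt (γ/2) (aI q ι' - Y q t) with hc | hc
            · exact le_max_of_le_left hc
            · apply le_max_of_le_right
              have h3 : Y q t - aI q ι' ≥ 3*γ := by
                rcases abs_cases (aI q ι' - Y q t) with ⟨he, _⟩ | ⟨he, _⟩ <;> linarith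
              have h5 : bI q ι' ≤ aI q ι' + γ := by
                rcases abs_cases (aI q ι' - bI q ι') with ⟨he, _⟩ | ⟨he, _⟩ <;> linarith
              linarith
          rw [hz, mul_zero]
        · intro hι''
          exact absurd hι hι''
      simp only [hG]
      rw [hsum]
      have hb := hvb q ι
      rw [abs_le] at hb
      rw [min_eq_right hb.2, max_eq_right hb.1]
    refine ⟨G, hGcont, fun q x => hGb q x, ?_⟩
    intro t
    obtain ⟨Good, hGc, hGcube⟩ := coverage hn hh t.2
    have hqg : ∀ q ∈ Good, ∃ ι, ι ∈ Cs q ∧ t.1 ∈ cube n Nr h q ι ∩ Kc n := by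
      intro q hq
      obtain ⟨ι, hι, hcube⟩ := hGcube q hq
      have hne' : (cube n Nr h q ι ∩ Kc n).Nonempty := ⟨t.1, hcube, t.2⟩
      refine ⟨ι, ?_, hcube, t.2⟩
      simp only [hCs, Finset.mem_filter]
      exact ⟨hι, hne'⟩
    choose ιg hιg1 hιg2 using hqg
    have hGoodest : ∀ q (hqG : q ∈ Good),
        |G q (Y q t.1) - φ t/((n:ℝ)+1)| ≤ η/((n:ℝ)+1) := by
      intro q hqG
      rw [hGeval q (ιg q hqG) (hιg1 q hqG) t.1 (hιg2 q hqG)]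
      simp only [hv]
      rw [div_sub_div_same, abs_div, abs_of_pos hd1]
      gcongr
      have hwc := hwmem q (ιg q hqG) (hιg1 q hqG)
      have htc := hιg2 q hqG
      have hdist : dist t (w q (ιg q hqG)) < δ := by
        rw [Subtype.dist_eq]
        have hb : dist t.1 (w q (ιg q hqG) : Fin n → ℝ) ≤ h*((Nr:ℝ) - 1) := by
          have hNr1 : (1:ℝ) ≤ (Nr:ℝ) := by
            rw [hNr]; push_cast; linarith
          apply (dist_pi_le_iff (by nlinarith)).2
          intro p
          have h1 := htc.1 p (Set.mem_univ p)
          have h2 := hwc.1 p (Set.mem_univ p)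
          have h3 := Real.dist_le_of_mem_Icc h1 h2
          calc dist (t.1 p) ((w q (ιg q hqG) : Fin n → ℝ) p) ≤
              h*(((q:ℕ):ℝ) + (Nr:ℝ)*((ιg q hqG p):ℝ) + (Nr:ℝ))
                - h*(((q:ℕ):ℝ) + (Nr:ℝ)*((ιg q hqG p):ℝ) + 1) := h3
          _ = h*((Nr:ℝ) - 1) := by ring
        have hNrc : ((Nr:ℝ)) = 2*(n:ℝ)+2 := by rw [hNr]; push_cast; ring
        have hlt : h*((Nr:ℝ) - 1) < δ := by
          rw [hNrc]
          nlinarith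
        linarith
      have hd := hδ hdist
      rw [Real.dist_eq] at hd
      rw [abs_sub_comm]
      exact hd.le
    have hM1 : (n:ℝ) + 1 ≤ (Good.card : ℝ) := by exact_mod_cast hGc
    have hcardu : (Finset.univ : Finset (Fin (2*n+1))).card = 2*n+1 := by simp
    have hM2 : (Good.card : ℝ) ≤ 2*(n:ℝ)+1 := by
      have h3 : Good.card ≤ 2*n+1 := by simpa using Finset.card_le_univ Good
      have h4 : (Good.card : ℝ) ≤ ((2*n+1 : ℕ) : ℝ) := by exact_mod_cast h3
      calc (Good.card : ℝ) ≤ ((2*n+1 : ℕ) : ℝ) := h4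
      _ = 2*(n:ℝ)+1 := by push_cast; ring
    set M : ℝ := (Good.card : ℝ) with hM
    have hsplit : (∑ q, G q (Y q t.1)) =
        (∑ q ∈ Finset.univ \ Good, G q (Y q t.1)) + ∑ q ∈ Good, G q (Y q t.1) :=
      (Finset.sum_sdiff (Finset.subset_univ Good)).symm
    have hSg : |(∑ q ∈ Good, G q (Y q t.1)) - M * (φ t/((n:ℝ)+1))| ≤ M * (η/((n:ℝ)+1)) := by
      have e1 : M * (φ t/((n:ℝ)+1)) = ∑ _q ∈ Good, φ t/((n:ℝ)+1) := by
        rw [Finset.sum_const, nsmul_eq_mul, hM]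
      have e2 : M * (η/((n:ℝ)+1)) = ∑ _q ∈ Good, η/((n:ℝ)+1) := by
        rw [Finset.sum_const, nsmul_eq_mul, hM]
      rw [e1, e2, ← Finset.sum_sub_distrib]
      exact (Finset.abs_sum_le_sum_abs _ _).trans
        (Finset.sum_le_sum (fun q hq => hGoodest q hq))
    have hRest : |∑ q ∈ Finset.univ \ Good, G q (Y q t.1)| ≤ (2*(n:ℝ)+1 - M) * V := by
      have hcard : (((Finset.univ \ Good).card : ℕ) : ℝ) = 2*(n:ℝ)+1 - M := by
        rw [Finset.card_sdiff_of_subset (Finset.subset_univ Good), hcardu]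
        have h3 : Good.card ≤ 2*n+1 := by simpa using Finset.card_le_univ Good
        rw [Nat.cast_sub h3, hM]
        push_cast
        ring
      calc |∑ q ∈ Finset.univ \ Good, G q (Y q t.1)|
          ≤ ∑ q ∈ Finset.univ \ Good, |G q (Y q t.1)| := Finset.abs_sum_le_sum_abs _ _
      _ ≤ ∑ _q ∈ Finset.univ \ Good, V := Finset.sum_le_sum (fun q _ => hGb q _)
      _ = (((Finset.univ \ Good).card : ℕ) : ℝ) * V := by
          rw [Finset.sum_const, nsmul_eq_mul]
      _ = (2*(n:ℝ)+1 - M) * V := by rw [hcard]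
    have hT1 : |φ t - M * (φ t/((n:ℝ)+1))| ≤ ‖φ‖ * ((M - ((n:ℝ)+1))/((n:ℝ)+1)) := by
      have e4 : φ t - M * (φ t/((n:ℝ)+1)) = φ t * ((((n:ℝ)+1) - M)/((n:ℝ)+1)) := by
        field_simp
      rw [e4, abs_mul, abs_div]
      have h5 : |(((n:ℝ)+1) - M)| = M - ((n:ℝ)+1) := by
        rw [abs_of_nonpos (by linarith)]
        ring
      rw [h5, abs_of_pos hd1]
      apply mul_le_mul (hφb t) le_rfl (div_nonneg (by linarith) (by linarith)) (norm_nonneg φ)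
    have hfinal : |φ t - ∑ q, G q (Y q t.1)| ≤
        ‖φ‖ * ((M - ((n:ℝ)+1))/((n:ℝ)+1)) + M * (η/((n:ℝ)+1)) + (2*(n:ℝ)+1 - M) * V := by
      rw [hsplit]
      have e5 : φ t - ((∑ q ∈ Finset.univ \ Good, G q (Y q t.1)) + ∑ q ∈ Good, G q (Y q t.1))
          = ((φ t - M * (φ t/((n:ℝ)+1)))
            - ((∑ q ∈ Good, G q (Y q t.1)) - M * (φ t/((n:ℝ)+1))))
            - (∑ q ∈ Finset.univ \ Good, G q (Y q t.1)) := by ring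
      rw [e5]
      have t1 := tri ((φ t - M * (φ t/((n:ℝ)+1)))
        - ((∑ q ∈ Good, G q (Y q t.1)) - M * (φ t/((n:ℝ)+1))))
        (∑ q ∈ Finset.univ \ Good, G q (Y q t.1))
      have t2 := tri (φ t - M * (φ t/((n:ℝ)+1)))
        ((∑ q ∈ Good, G q (Y q t.1)) - M * (φ t/((n:ℝ)+1)))
      linarith
    have harr : ‖φ‖ * ((M - ((n:ℝ)+1))/((n:ℝ)+1)) + M * (η/((n:ℝ)+1)) + (2*(n:ℝ)+1 - M) * V
        ≤ (2*(n:ℝ)+1)/(2*(n:ℝ)+2) * ‖φ‖ := by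
      rw [hηdef, hVdef, ← sub_nonneg]
      have key : (2*(n:ℝ)+1)/(2*(n:ℝ)+2)*‖φ‖ - (‖φ‖*((M - ((n:ℝ)+1))/((n:ℝ)+1))
          + M*((‖φ‖/(2*(2*(n:ℝ)+1)))/((n:ℝ)+1)) + (2*(n:ℝ)+1 - M)*(‖φ‖/((n:ℝ)+1)))
          = (‖φ‖*(2*(n:ℝ)+1-M))/(2*(2*(n:ℝ)+1)*((n:ℝ)+1)) := by
        field_simp
        ring
      rw [key]
      apply div_nonneg (mul_nonneg (norm_nonneg φ) (by linarith)) (by positivity)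
    linarith
set_option maxHeartbeats 1000000 in
theorem outer {n : ℕ} (hn : 1 ≤ n) (Y : Fin (2*n+1) → (Fin n → ℝ) → ℝ)
    (hYcont : ∀ q, ContinuousOn (Y q) (Kc n))
    (hstar : ∀ δ : ℝ, 0 < δ → ∃ h γ : ℝ, 0 < h ∧ h * (2*(n:ℝ)+2) < δ ∧ 0 < γ ∧
      (∀ q : Fin (2*n+1), ∀ ι ∈ idxF n h,
        ∀ t ∈ cube n (2*n+2) h q ι ∩ Kc n, ∀ t' ∈ cube n (2*n+2) h q ι ∩ Kc n,
        |Y q t - Y q t'| ≤ γ) ∧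
      (∀ q : Fin (2*n+1), ∀ ι ∈ idxF n h, ∀ ι' ∈ idxF n h, ι ≠ ι' →
        ∀ t ∈ cube n (2*n+2) h q ι ∩ Kc n, ∀ t' ∈ cube n (2*n+2) h q ι' ∩ Kc n,
        3*γ ≤ |Y q t - Y q t'|))
    (f : (Fin n → ℝ) → ℝ) (hf : ContinuousOn f (Kc n)) :
    ∃ F : Fin (2*n+1) → ℝ → ℝ, (∀ q, Continuous (F q)) ∧
      ∀ t ∈ Kc n, f t = ∑ q, F q (Y q t) := by
  classical
  have hn1 : (1:ℝ) ≤ (n:ℝ) := by exact_mod_cast hn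
  have hd1 : (0:ℝ) < (n:ℝ)+1 := by linarith
  set θ : ℝ := (2*(n:ℝ)+1)/(2*(n:ℝ)+2) with hθ
  have hθ0 : 0 ≤ θ := by positivity
  have hθ1 : θ < 1 := by
    rw [hθ, div_lt_one (by linarith)]
    linarith
  choose Gf hGfc hGfb hGfe using outer_step hn Y hYcont hstar
  have hYX : ∀ q, Continuous (fun t : ↥(Kc n) => Y q t.1) := fun q => (hYcont q).restrict
  let comp : C(↥(Kc n), ℝ) → C(↥(Kc n), ℝ) := fun φ =>
    ⟨fun t => ∑ q, Gf φ q (Y q t.1), by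
      apply continuous_finset_sum
      intro q _
      exact (hGfc φ q).comp (hYX q)⟩
  let φ0 : C(↥(Kc n), ℝ) := ⟨(Kc n).restrict f, hf.restrict⟩
  let φs : ℕ → C(↥(Kc n), ℝ) := fun j => Nat.rec φ0 (fun _ φ => φ - comp φ) j
  have hφsS : ∀ j, φs (j+1) = φs j - comp (φs j) := fun j => rfl
  have hnorm : ∀ j, ‖φs (j+1)‖ ≤ θ * ‖φs j‖ := by
    intro j
    rw [ContinuousMap.norm_le _ (by positivity)]
    intro t
    rw [hφsS]
    have heval : (φs j - comp (φs j)) t = φs j t - ∑ q, Gf (φs j) q (Y q t.1) := by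
      simp [comp, ContinuousMap.sub_apply]
    rw [heval, Real.norm_eq_abs, hθ]
    exact hGfe (φs j) t
  have hnormj : ∀ j, ‖φs j‖ ≤ θ^j * ‖φ0‖ := by
    intro j
    induction j with
    | zero => rw [pow_zero, one_mul]; exact le_rfl
    | succ j ih =>
      calc ‖φs (j+1)‖ ≤ θ * ‖φs j‖ := hnorm j
      _ ≤ θ * (θ^j * ‖φ0‖) := by nlinarith
      _ = θ^(j+1) * ‖φ0‖ := by ring
  have hsummb : Summable (fun j : ℕ => θ^j * (‖φ0‖/((n:ℝ)+1))) :=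
    (summable_geometric_of_lt_one hθ0 hθ1).mul_right _
  have hGbd : ∀ (j : ℕ) q x, |Gf (φs j) q x| ≤ θ^j * (‖φ0‖/((n:ℝ)+1)) := by
    intro j q x
    have h1 := hGfb (φs j) q x
    have h2 : ‖φs j‖/((n:ℝ)+1) ≤ θ^j * ‖φ0‖/((n:ℝ)+1) := by
      gcongr
      exact hnormj j
    calc |Gf (φs j) q x| ≤ ‖φs j‖/((n:ℝ)+1) := h1
    _ ≤ θ^j * ‖φ0‖/((n:ℝ)+1) := h2
    _ = θ^j * (‖φ0‖/((n:ℝ)+1)) := by ring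
  refine ⟨fun q x => ∑' j, Gf (φs j) q x, ?_, ?_⟩
  · intro q
    apply continuous_tsum (fun j => hGfc (φs j) q) hsummb
    intro j x
    rw [Real.norm_eq_abs]
    exact hGbd j q x
  · intro t ht
    set tX : ↥(Kc n) := ⟨t, ht⟩ with htX
    have key1 : ∀ J, ∑ j ∈ Finset.range J, ∑ q, Gf (φs j) q (Y q t) = φ0 tX - φs J tX := by
      intro J
      induction J with
      | zero => simp [show (φs 0) = φ0 from rfl]
      | succ J ih =>
        rw [Finset.sum_range_succ, ih, hφsS]
        have heval : (φs J - comp (φs J)) tX = φs J tX - ∑ q, Gf (φs J) q (Y q t) := by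
          simp [comp, ContinuousMap.sub_apply, htX]
        rw [heval]
        ring
    have hφsJ0 : Filter.Tendsto (fun J => φs J tX) Filter.atTop (nhds 0) := by
      apply squeeze_zero_norm (fun J => ?_)
        (by simpa using (tendsto_pow_atTop_nhds_zero_of_lt_one hθ0 hθ1).mul_const ‖φ0‖)
      rw [Real.norm_eq_abs]
      refine le_trans ?_ (hnormj J)
      have h8 := (φs J).norm_coe_le_norm tX
      rwa [Real.norm_eq_abs] at h8
    have h2 : Filter.Tendsto (fun J => ∑ j ∈ Finset.range J, ∑ q, Gf (φs j) q (Y q t))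
        Filter.atTop (nhds (φ0 tX)) := by
      rw [funext key1]
      have := (tendsto_const_nhds (x := φ0 tX) (f := Filter.atTop (α := ℕ))).sub hφsJ0
      simpa using this
    have h3 : ∀ q : Fin (2*n+1), Summable (fun j => Gf (φs j) q (Y q t)) := by
      intro q
      apply Summable.of_norm_bounded hsummb
      intro j
      rw [Real.norm_eq_abs]
      exact hGbd j q _
    have h4 : Filter.Tendsto (fun J => ∑ q, ∑ j ∈ Finset.range J, Gf (φs j) q (Y q t))
        Filter.atTop (nhds (∑ q, ∑' j, Gf (φs j) q (Y q t))) := by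
      apply tendsto_finset_sum
      intro q _
      exact (h3 q).hasSum.tendsto_sum_nat
    have h5 : (fun J => ∑ j ∈ Finset.range J, ∑ q, Gf (φs j) q (Y q t))
        = fun J => ∑ q, ∑ j ∈ Finset.range J, Gf (φs j) q (Y q t) := by
      funext J
      exact Finset.sum_comm
    rw [h5] at h2
    have h6 := tendsto_nhds_unique h2 h4
    have hft : f t = φ0 tX := rfl
    show f t = ∑ q, ∑' j, Gf (φs j) q (Y q t)
    rw [hft]
    exact h6

end KA

/-- Kolmogorov–Arnold representation theorem: any multivariate continuous
function on the unit cube `[0,1]^n` can be represented as a superposition of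
one-dimensional continuous functions. -/
theorem kolmogorov_arnold_representation (n : ℕ) (hn : 1 ≤ n)
    (f : (Fin n → ℝ) → ℝ)
    (hf : ContinuousOn f (Set.univ.pi fun _ : Fin n => Set.Icc (0 : ℝ) 1)) :
    ∃ (F : Fin (2 * n + 1) → ℝ → ℝ) (g : Fin (2 * n + 1) → Fin n → ℝ → ℝ),
      (∀ q, Continuous (F q)) ∧
      (∀ q p, ContinuousOn (g q p) (Set.Icc (0 : ℝ) 1)) ∧
      (∀ t ∈ Set.univ.pi fun _ : Fin n => Set.Icc (0 : ℝ) 1,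
        f t = ∑ q : Fin (2 * n + 1), F q (∑ p : Fin n, g q p (t p))) := by
  have hYcont : ∀ q, ContinuousOn (KA.ygl hn q) (KA.Kc n) := by
    intro q
    apply continuousOn_finset_sum
    intro p _
    apply (KA.gl_contOn hn q p).comp (continuous_apply p).continuousOn
    intro t ht
    exact ht p (Set.mem_univ p)
  obtain ⟨F, hFc, hFeq⟩ := KA.outer hn (KA.ygl hn) hYcont (fun δ hδ => KA.star hn δ hδ) f hf
  exact ⟨F, KA.gl hn, hFc, (fun q p => KA.gl_contOn hn q p), fun t ht => hFeq t ht⟩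
end

section
/- The gradient of the KL divergence in the log-linear model: fix a probability distribution p̂ on Ω, s₀ ∈ S, and θ : Ω → ℝ with θ(s) = 0 for s ∉ S. Then the function x ↦ D_KL(p̂, p_{θ[s₀ ↦ x]}) is differentiable at x = θ(s₀) with derivative η_θ(s₀) − η̂(s₀). -/
open scoped Classical BigOperators

/-- The gradient of the KL divergence from a fixed empirical distribution `p̂`
to the log-linear model `p_θ`: the partial derivative with respect to `θ(s₀)`
equals `η_θ(s₀) − η̂(s₀)`. -/
theorem deriv_KL_eq_eta_sub_etahat
    {Ω : Type*} [Fintype Ω] [Nonempty Ω] [PartialOrder Ω]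
    (S : Finset Ω) (s₀ : Ω) (hs₀ : s₀ ∈ S)
    (θ : Ω → ℝ) (hθ : ∀ s ∉ S, θ s = 0)
    (phat : Ω → ℝ) (hphat0 : ∀ ω, 0 ≤ phat ω) (hphat1 : ∑ ω : Ω, phat ω = 1)
    (ψ : (Ω → ℝ) → ℝ)
    (hψ : ∀ ϑ : Ω → ℝ,
      ψ ϑ = Real.log (∑ ω : Ω, Real.exp (∑ s ∈ S.filter (fun s => s ≤ ω), ϑ s)))
    (p : (Ω → ℝ) → Ω → ℝ)
    (hp : ∀ ϑ ω, p ϑ ω = Real.exp ((∑ s ∈ S.filter (fun s => s ≤ ω), ϑ s) - ψ ϑ))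
    (KL : (Ω → ℝ) → ℝ)
    (hKL : ∀ ϑ : Ω → ℝ, KL ϑ = ∑ ω : Ω, phat ω * Real.log (phat ω / p ϑ ω))
    (η ηhat : Ω → ℝ)
    (hη : ∀ s, η s = ∑ ω ∈ Finset.univ.filter (fun ω => s ≤ ω), p θ ω)
    (hηhat : ∀ s, ηhat s = ∑ ω ∈ Finset.univ.filter (fun ω => s ≤ ω), phat ω) :
    HasDerivAt (fun x : ℝ => KL (Function.update θ s₀ x))
      (η s₀ - ηhat s₀) (θ s₀) := by
  classical
  set a : Ω → ℝ := fun ω => ∑ s ∈ S.filter (fun s => s ≤ ω), θ s with ha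
  set b : Ω → ℝ := fun ω => if s₀ ≤ ω then 1 else 0 with hb
  have hA : ∀ (x : ℝ) (ω : Ω),
      (∑ s ∈ S.filter (fun s => s ≤ ω), Function.update θ s₀ x s)
        = a ω + b ω * (x - θ s₀) := by
    intro x ω
    by_cases h : s₀ ≤ ω
    · have hmem : s₀ ∈ S.filter (fun s => s ≤ ω) := Finset.mem_filter.mpr ⟨hs₀, h⟩
      rw [Finset.sum_update_of_mem hmem]
      have haω : a ω = θ s₀ + ∑ s ∈ S.filter (fun s => s ≤ ω) \ {s₀}, θ s :=
        Finset.sum_eq_add_sum_sdiff_singleton_of_mem hmem θ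
      rw [haω]; simp only [hb, if_pos h]; ring
    · have hcong : ∀ s ∈ S.filter (fun s => s ≤ ω), Function.update θ s₀ x s = θ s := by
        intro s hs
        rcases Finset.mem_filter.mp hs with ⟨_, hsω⟩
        have hne : s ≠ s₀ := by rintro rfl; exact h hsω
        simp [Function.update_of_ne hne]
      rw [Finset.sum_congr rfl hcong]
      simp [ha, hb, if_neg h]
  set Z : ℝ → ℝ := fun x => ∑ ω : Ω, Real.exp (a ω + b ω * (x - θ s₀)) with hZ
  have hZpos : ∀ x, 0 < Z x := fun x =>
    Finset.sum_pos (fun ω _ => Real.exp_pos _) Finset.univ_nonempty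
  have hψx : ∀ x, ψ (Function.update θ s₀ x) = Real.log (Z x) := by
    intro x; rw [hψ]; congr 1
    exact Finset.sum_congr rfl fun ω _ => by rw [hA]
  have hKLx : ∀ x, KL (Function.update θ s₀ x)
      = (∑ ω : Ω, phat ω * Real.log (phat ω))
        - (∑ ω : Ω, phat ω * (a ω + b ω * (x - θ s₀)))
        + Real.log (Z x) := by
    intro x
    rw [hKL]
    have hterm : ∀ ω : Ω, phat ω * Real.log (phat ω / p (Function.update θ s₀ x) ω)
        = phat ω * Real.log (phat ω)
          - phat ω * (a ω + b ω * (x - θ s₀))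
          + phat ω * Real.log (Z x) := by
      intro ω
      rcases eq_or_lt_of_le (hphat0 ω) with h0 | h0
      · simp [← h0]
      · rw [hp, hA, hψx, Real.log_div (ne_of_gt h0) (Real.exp_ne_zero _),
          Real.log_exp]
        ring
    rw [Finset.sum_congr rfl fun ω _ => hterm ω]
    rw [Finset.sum_add_distrib, Finset.sum_sub_distrib, ← Finset.sum_mul, hphat1, one_mul]
  have h1 : HasDerivAt (fun x : ℝ => ∑ ω : Ω, phat ω * (a ω + b ω * (x - θ s₀)))
      (∑ ω : Ω, phat ω * b ω) (θ s₀) := by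
    have := HasDerivAt.fun_sum (fun ω (_ : ω ∈ Finset.univ) =>
      ((((hasDerivAt_id (θ s₀)).sub_const (θ s₀)).const_mul (b ω)).const_add
        (a ω)).const_mul (phat ω))
    refine this.congr_deriv ?_
    exact Finset.sum_congr rfl fun ω _ => by rw [mul_one]
  have hZd : HasDerivAt Z (∑ ω : Ω, b ω * Real.exp (a ω)) (θ s₀) := by
    have := HasDerivAt.fun_sum (fun ω (_ : ω ∈ Finset.univ) =>
      ((((hasDerivAt_id (θ s₀)).sub_const (θ s₀)).const_mul (b ω)).const_add
        (a ω)).exp)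
    refine this.congr_deriv ?_
    exact Finset.sum_congr rfl fun ω _ => by
      rw [id, sub_self, mul_zero, add_zero, mul_one, mul_comm]
  have hlogd : HasDerivAt (fun x => Real.log (Z x))
      ((∑ ω : Ω, b ω * Real.exp (a ω)) / Z (θ s₀)) (θ s₀) :=
    hZd.log (ne_of_gt (hZpos _))
  have hmain : HasDerivAt (fun x : ℝ =>
      (∑ ω : Ω, phat ω * Real.log (phat ω))
        - (∑ ω : Ω, phat ω * (a ω + b ω * (x - θ s₀)))
        + Real.log (Z x))
      (0 - (∑ ω : Ω, phat ω * b ω) + (∑ ω : Ω, b ω * Real.exp (a ω)) / Z (θ s₀))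
      (θ s₀) := ((hasDerivAt_const (θ s₀) _).sub h1).add hlogd
  have hfun : (fun x : ℝ => KL (Function.update θ s₀ x))
      = fun x : ℝ =>
      (∑ ω : Ω, phat ω * Real.log (phat ω))
        - (∑ ω : Ω, phat ω * (a ω + b ω * (x - θ s₀)))
        + Real.log (Z x) := funext hKLx
  rw [hfun]
  convert hmain using 1
  have hψθ : ψ θ = Real.log (Z (θ s₀)) := by
    have := hψx (θ s₀); rwa [Function.update_eq_self] at this
  have hnum : (∑ ω : Ω, b ω * Real.exp (a ω))
      = ∑ ω ∈ Finset.univ.filter (fun ω => s₀ ≤ ω), Real.exp (a ω) := by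
    rw [Finset.sum_filter]
    exact Finset.sum_congr rfl fun ω _ => by by_cases h : s₀ ≤ ω <;> simp [hb, h]
  have hηs : η s₀ = (∑ ω : Ω, b ω * Real.exp (a ω)) / Z (θ s₀) := by
    rw [hη, hnum, Finset.sum_div]
    refine Finset.sum_congr rfl fun ω _ => ?_
    rw [hp, hψθ, Real.exp_sub, Real.exp_log (hZpos _)]
  have hηhats : ηhat s₀ = ∑ ω : Ω, phat ω * b ω := by
    rw [hηhat, Finset.sum_filter]
    exact Finset.sum_congr rfl fun ω _ => by by_cases h : s₀ ≤ ω <;> simp [hb, h]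
  rw [hηs, hηhats]; ring
end

section
/- The second derivatives of the KL divergence give the Fisher information: fix a probability distribution p̂ on Ω, elements s_i, s_j ∈ S, and θ : Ω → ℝ with θ(s) = 0 for s ∉ S. Then the second partial derivative of (x, y) ↦ D_KL(p̂, p_{θ[s_i ↦ x, s_j ↦ y]}) at (θ(s_i), θ(s_j)) equals g_{ij} = Σ_{ω ∈ Ω, ω ≥ s_i and ω ≥ s_j} p(ω; θ) − η_θ(s_i) η_θ(s_j). -/
open scoped Classical BigOperators

lemma div_sub_div_mul_div (m n₁ n₂ z : ℝ) (hz : z ≠ 0) :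
    m / z - n₁ / z * (n₂ / z) = (m * z - n₁ * n₂) / z ^ 2 := by
  field_simp


/-- The second partial derivatives of the KL divergence from `p̂` to the
log-linear model give the Fisher information: the mixed second partial
derivative of the KL divergence with respect to the parameters `θ(s_i)` and
`θ(s_j)`, taken at the current parameter `θ` (i.e. at `(θ(s_i), θ(s_j))`),
equals `g_{ij} = Σ_{ω ≥ s_i, ω ≥ s_j} p(ω; θ) − η_θ(s_i) η_θ(s_j)`. -/
theorem second_deriv_KL_eq_fisher_information
    {Ω : Type*} [Fintype Ω] [Nonempty Ω] [PartialOrder Ω]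
    (S : Finset Ω) (si sj : Ω) (hsi : si ∈ S) (hsj : sj ∈ S)
    (θ : Ω → ℝ) (hθ : ∀ s ∉ S, θ s = 0)
    (phat : Ω → ℝ) (hphat0 : ∀ ω, 0 ≤ phat ω) (hphat1 : ∑ ω : Ω, phat ω = 1)
    (ψ : (Ω → ℝ) → ℝ)
    (hψ : ∀ ϑ : Ω → ℝ,
      ψ ϑ = Real.log (∑ ω : Ω, Real.exp (∑ s ∈ S.filter (fun s => s ≤ ω), ϑ s)))
    (p : (Ω → ℝ) → Ω → ℝ)
    (hp : ∀ ϑ ω, p ϑ ω = Real.exp ((∑ s ∈ S.filter (fun s => s ≤ ω), ϑ s) - ψ ϑ))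
    (KL : (Ω → ℝ) → ℝ)
    (hKL : ∀ ϑ : Ω → ℝ, KL ϑ = ∑ ω : Ω, phat ω * Real.log (phat ω / p ϑ ω))
    (η : Ω → ℝ)
    (hη : ∀ s, η s = ∑ ω ∈ Finset.univ.filter (fun ω => s ≤ ω), p θ ω) :
    HasDerivAt
      (fun y : ℝ => deriv
        (fun x : ℝ => KL (θ + x • (Pi.single si 1 : Ω → ℝ) + y • (Pi.single sj 1 : Ω → ℝ))) 0)
      ((∑ ω ∈ Finset.univ.filter (fun ω => si ≤ ω ∧ sj ≤ ω), p θ ω) - η si * η sj)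
      0 := by
  classical
  set a : Ω → ℝ := fun ω => ∑ s ∈ S.filter (fun s => s ≤ ω), θ s with ha
  set u : Ω → ℝ := fun ω => if si ≤ ω then (1:ℝ) else 0 with hu
  set v : Ω → ℝ := fun ω => if sj ≤ ω then (1:ℝ) else 0 with hv
  have key : ∀ (t : Ω), t ∈ S → ∀ ω : Ω,
      (∑ s ∈ S.filter (fun s => s ≤ ω), (Pi.single t (1:ℝ) : Ω → ℝ) s)
        = if t ≤ ω then (1:ℝ) else 0 := by
    intro t ht ω
    simp only [Pi.single_apply]
    rw [Finset.sum_ite_eq' (S.filter (fun s => s ≤ ω)) t (fun _ => (1:ℝ))]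
    simp [Finset.mem_filter, ht]
  have hsum : ∀ (x y : ℝ) (ω : Ω),
      (∑ s ∈ S.filter (fun s => s ≤ ω),
        (θ + x • (Pi.single si 1 : Ω → ℝ) + y • (Pi.single sj 1 : Ω → ℝ)) s)
        = a ω + x * u ω + y * v ω := by
    intro x y ω
    simp only [Pi.add_apply, Pi.smul_apply, smul_eq_mul]
    rw [Finset.sum_add_distrib, Finset.sum_add_distrib, ← Finset.mul_sum, ← Finset.mul_sum,
        key si hsi ω, key sj hsj ω]
  set E : ℝ → ℝ → Ω → ℝ := fun x y ω => Real.exp (a ω + x * u ω + y * v ω) with hE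
  set Z : ℝ → ℝ → ℝ := fun x y => ∑ ω : Ω, E x y ω with hZdef
  have hZpos : ∀ x y, 0 < Z x y := fun x y =>
    Finset.sum_pos (fun ω _ => Real.exp_pos _) Finset.univ_nonempty
  have hψ' : ∀ x y : ℝ,
      ψ (θ + x • (Pi.single si 1 : Ω → ℝ) + y • (Pi.single sj 1 : Ω → ℝ))
        = Real.log (Z x y) := by
    intro x y
    rw [hψ]
    congr 1
    exact Finset.sum_congr rfl (fun ω _ => by rw [hsum])
  set C : ℝ := ∑ ω : Ω, phat ω * Real.log (phat ω) with hC
  have hKL' : ∀ x y : ℝ,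
      KL (θ + x • (Pi.single si 1 : Ω → ℝ) + y • (Pi.single sj 1 : Ω → ℝ))
        = C - (∑ ω : Ω, phat ω * (a ω + x * u ω + y * v ω)) + Real.log (Z x y) := by
    intro x y
    rw [hKL]
    have hterm : ∀ ω : Ω,
        phat ω * Real.log (phat ω
          / p (θ + x • (Pi.single si 1 : Ω → ℝ) + y • (Pi.single sj 1 : Ω → ℝ)) ω)
          = phat ω * Real.log (phat ω) - phat ω * (a ω + x * u ω + y * v ω)
            + phat ω * Real.log (Z x y) := by
      intro ω
      rcases eq_or_lt_of_le (hphat0 ω) with h0 | h0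
      · simp [← h0]
      · rw [hp, hsum, hψ', Real.log_div (ne_of_gt h0) (Real.exp_ne_zero _), Real.log_exp]
        ring
    rw [Finset.sum_congr rfl (fun ω _ => hterm ω), Finset.sum_add_distrib,
        Finset.sum_sub_distrib, ← Finset.sum_mul, hphat1, one_mul]
  set cU : ℝ := ∑ ω : Ω, phat ω * u ω with hcU
  set Nu : ℝ → ℝ := fun y => ∑ ω : Ω, E 0 y ω * u ω with hNudef
  -- inner derivative
  have houter : (fun y : ℝ => deriv
      (fun x : ℝ => KL (θ + x • (Pi.single si 1 : Ω → ℝ) + y • (Pi.single sj 1 : Ω → ℝ))) 0)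
      = fun y : ℝ => Nu y / Z 0 y - cU := by
    funext y
    have h1 : HasDerivAt (fun x : ℝ => ∑ ω : Ω, phat ω * (a ω + x * u ω + y * v ω)) cU 0 := by
      apply HasDerivAt.fun_sum
      intro ω _
      exact ((((hasDerivAt_mul_const (u ω)).const_add (a ω)).add_const (y * v ω)).const_mul
        (phat ω))
    have h2 : HasDerivAt (fun x : ℝ => Z x y) (Nu y) 0 := by
      show HasDerivAt (fun x : ℝ => ∑ ω : Ω, E x y ω) (∑ ω : Ω, E 0 y ω * u ω) 0
      apply HasDerivAt.fun_sum
      intro ω _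
      show HasDerivAt (fun x : ℝ => Real.exp (a ω + x * u ω + y * v ω))
        (Real.exp (a ω + 0 * u ω + y * v ω) * u ω) 0
      exact ((((hasDerivAt_mul_const (u ω)).const_add (a ω)).add_const (y * v ω)) :
        HasDerivAt _ _ (0:ℝ)).exp
    have h3 : HasDerivAt (fun x : ℝ => Real.log (Z x y)) (Nu y / Z 0 y) 0 :=
      h2.log (ne_of_gt (hZpos 0 y))
    have hfull : HasDerivAt
        (fun x : ℝ => C - (∑ ω : Ω, phat ω * (a ω + x * u ω + y * v ω)) + Real.log (Z x y))
        (0 - cU + Nu y / Z 0 y) 0 := ((hasDerivAt_const (0:ℝ) C).sub h1).add h3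
    have heq : (fun x : ℝ =>
        KL (θ + x • (Pi.single si 1 : Ω → ℝ) + y • (Pi.single sj 1 : Ω → ℝ)))
        = fun x : ℝ =>
          C - (∑ ω : Ω, phat ω * (a ω + x * u ω + y * v ω)) + Real.log (Z x y) :=
      funext fun x => hKL' x y
    rw [heq, hfull.deriv]
    ring
  rw [houter]
  -- outer derivative
  set M : ℝ := ∑ ω : Ω, E 0 0 ω * v ω * u ω with hM
  set Nv : ℝ → ℝ := fun y => ∑ ω : Ω, E 0 y ω * v ω with hNvdef
  have hNu : HasDerivAt Nu M 0 := by
    show HasDerivAt (fun y : ℝ => ∑ ω : Ω, E 0 y ω * u ω) (∑ ω : Ω, E 0 0 ω * v ω * u ω) 0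
    apply HasDerivAt.fun_sum
    intro ω _
    show HasDerivAt (fun y : ℝ => Real.exp (a ω + 0 * u ω + y * v ω) * u ω)
      (Real.exp (a ω + 0 * u ω + 0 * v ω) * v ω * u ω) 0
    exact ((((hasDerivAt_mul_const (v ω)).const_add (a ω + 0 * u ω)) :
      HasDerivAt _ _ (0:ℝ)).exp).mul_const (u ω)
  have hZ0 : HasDerivAt (fun y => Z 0 y) (Nv 0) 0 := by
    show HasDerivAt (fun y : ℝ => ∑ ω : Ω, E 0 y ω) (∑ ω : Ω, E 0 0 ω * v ω) 0
    apply HasDerivAt.fun_sum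
    intro ω _
    show HasDerivAt (fun y : ℝ => Real.exp (a ω + 0 * u ω + y * v ω))
      (Real.exp (a ω + 0 * u ω + 0 * v ω) * v ω) 0
    exact (((hasDerivAt_mul_const (v ω)).const_add (a ω + 0 * u ω)) :
      HasDerivAt _ _ (0:ℝ)).exp
  have hdiv : HasDerivAt (fun y => Nu y / Z 0 y)
      ((M * Z 0 0 - Nu 0 * Nv 0) / (Z 0 0) ^ 2) 0 :=
    hNu.div hZ0 (ne_of_gt (hZpos 0 0))
  have hfin := hdiv.sub_const cU
  -- identify the value
  have hpθ : ∀ ω : Ω, p θ ω = E 0 0 ω / Z 0 0 := by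
    intro ω
    rw [hp, hψ]
    have hz : (∑ ω' : Ω, Real.exp (∑ s ∈ S.filter (fun s => s ≤ ω'), θ s)) = Z 0 0 := by
      apply Finset.sum_congr rfl
      intro ω' _
      simp [hE, ha]
    rw [hz, Real.exp_sub, Real.exp_log (hZpos 0 0)]
    congr 1
    simp [hE, ha]
  have hval : (∑ ω ∈ Finset.univ.filter (fun ω => si ≤ ω ∧ sj ≤ ω), p θ ω) - η si * η sj
      = (M * Z 0 0 - Nu 0 * Nv 0) / (Z 0 0) ^ 2 := by
    have hMval : (∑ ω ∈ Finset.univ.filter (fun ω => si ≤ ω ∧ sj ≤ ω), p θ ω) = M / Z 0 0 := by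
      rw [hM, Finset.sum_div]
      rw [Finset.sum_filter]
      apply Finset.sum_congr rfl
      intro ω _
      rw [hpθ]
      by_cases h1 : si ≤ ω <;> by_cases h2 : sj ≤ ω <;> simp [hu, hv, h1, h2]
    have hηi : η si = Nu 0 / Z 0 0 := by
      rw [hη, hNudef, Finset.sum_div, Finset.sum_filter]
      apply Finset.sum_congr rfl
      intro ω _
      rw [hpθ]
      by_cases h1 : si ≤ ω <;> simp [hu, h1]
    have hηj : η sj = Nv 0 / Z 0 0 := by
      rw [hη, hNvdef, Finset.sum_div, Finset.sum_filter]
      apply Finset.sum_congr rfl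
      intro ω _
      rw [hpθ]
      by_cases h2 : sj ≤ ω <;> simp [hv, h2]
    rw [hMval, hηi, hηj]
    exact div_sub_div_mul_div _ _ _ _ (ne_of_gt (hZpos 0 0))
  rw [hval]
  exact hfin
end

section
/- Moment matching at the optimum: let p̂ be a probability distribution on Ω and suppose θ* : S → ℝ minimizes θ ↦ D_KL(p̂, p_θ) over ℝ^S. Then the expectation parameters match the empirical ones: η_{θ*}(s) = η̂(s) for every s ∈ S, where η_{θ*}(s) = Σ_{ω ≥ s} p(ω; θ*) and η̂(s) = Σ_{ω ≥ s} p̂(ω). -/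
open scoped Classical BigOperators

set_option maxHeartbeats 1000000 in
/-- Moment matching at the optimum: if `θ*` minimizes the KL divergence
`θ ↦ D_KL(p̂, p_θ)` over `ℝ^S`, then the expectation parameters of the model
match the empirical ones: `η_{θ*}(s) = η̂(s)` for every `s ∈ S`. -/
theorem moment_matching_at_optimum
    {Ω : Type*} [Fintype Ω] [Nonempty Ω] [PartialOrder Ω]
    (S : Finset Ω)
    (phat : Ω → ℝ) (hphat0 : ∀ ω, 0 ≤ phat ω) (hphat1 : ∑ ω : Ω, phat ω = 1)
    (ψ : ({s : Ω // s ∈ S} → ℝ) → ℝ)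
    (hψ : ∀ θ : {s : Ω // s ∈ S} → ℝ,
      ψ θ = Real.log (∑ ω : Ω,
        Real.exp (∑ s ∈ S.attach.filter (fun s : {s : Ω // s ∈ S} => (s : Ω) ≤ ω), θ s)))
    (p : ({s : Ω // s ∈ S} → ℝ) → Ω → ℝ)
    (hp : ∀ (θ : {s : Ω // s ∈ S} → ℝ) (ω : Ω), p θ ω =
      Real.exp ((∑ s ∈ S.attach.filter (fun s : {s : Ω // s ∈ S} => (s : Ω) ≤ ω), θ s) - ψ θ))
    (KL : ({s : Ω // s ∈ S} → ℝ) → ℝ)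
    (hKL : ∀ θ : {s : Ω // s ∈ S} → ℝ,
      KL θ = ∑ ω : Ω, phat ω * Real.log (phat ω / p θ ω))
    (θstar : {s : Ω // s ∈ S} → ℝ)
    (hmin : ∀ θ : {s : Ω // s ∈ S} → ℝ, KL θstar ≤ KL θ) :
    ∀ s : {s : Ω // s ∈ S},
      (∑ ω ∈ Finset.univ.filter (fun ω => (s : Ω) ≤ ω), p θstar ω)
        = ∑ ω ∈ Finset.univ.filter (fun ω => (s : Ω) ≤ ω), phat ω := by
  intro s
  classical
  set a : Ω → ℝ := fun ω =>
    ∑ s' ∈ S.attach.filter (fun s' : {s : Ω // s ∈ S} => (s' : Ω) ≤ ω), θstar s' with ha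
  set c : Ω → ℝ := fun ω => if (s : Ω) ≤ ω then 1 else 0 with hc
  set Z : ℝ → ℝ := fun t => ∑ ω : Ω, Real.exp (a ω + t * c ω) with hZ
  set e : {s : Ω // s ∈ S} → ℝ := Pi.single s 1 with he
  have hZpos : ∀ t, 0 < Z t := fun t =>
    Finset.sum_pos (fun ω _ => Real.exp_pos _) Finset.univ_nonempty
  have hZderiv : ∀ t, HasDerivAt Z (∑ ω : Ω, c ω * Real.exp (a ω + t * c ω)) t := by
    intro t
    apply HasDerivAt.fun_sum
    intro ω _
    have h1 : HasDerivAt (fun t : ℝ => a ω + t * c ω) (c ω) t := by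
      simpa using ((hasDerivAt_id t).mul_const (c ω)).const_add (a ω)
    simpa [mul_comm] using h1.exp
  -- the sum along the line
  have hline : ∀ (t : ℝ) (ω : Ω),
      (∑ s' ∈ S.attach.filter (fun s' : {s : Ω // s ∈ S} => (s' : Ω) ≤ ω),
        (θstar + t • e) s') = a ω + t * c ω := by
    intro t ω
    have : ∑ s' ∈ S.attach.filter (fun s' : {s : Ω // s ∈ S} => (s' : Ω) ≤ ω),
        (t • e) s' = t * c ω := by
      have h2 : ∀ s' : {s : Ω // s ∈ S},
          (t • e) s' = if s' = s then t else 0 := by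
        intro s'
        by_cases h : s' = s
        · simp [h, he]
        · simp [he, h, Pi.single_eq_of_ne h]
      rw [Finset.sum_congr rfl (fun s' _ => h2 s'), Finset.sum_ite_eq']
      simp [hc, mul_comm]
    simp only [Pi.add_apply, Finset.sum_add_distrib, this, ha]
  have hZt : ∀ t : ℝ, ψ (θstar + t • e) = Real.log (Z t) := by
    intro t
    rw [hψ]
    congr 1
    exact Finset.sum_congr rfl (fun ω _ => by rw [hline t ω])
  -- KL decomposition
  have hKL' : ∀ θ : {s : Ω // s ∈ S} → ℝ,
      KL θ = (∑ ω : Ω, phat ω * Real.log (phat ω))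
        - (∑ ω : Ω, phat ω *
            (∑ s' ∈ S.attach.filter (fun s' : {s : Ω // s ∈ S} => (s' : Ω) ≤ ω), θ s'))
        + ψ θ := by
    intro θ
    rw [hKL]
    have hterm : ∀ ω : Ω, phat ω * Real.log (phat ω / p θ ω)
        = phat ω * Real.log (phat ω)
          - phat ω * (∑ s' ∈ S.attach.filter (fun s' : {s : Ω // s ∈ S} => (s' : Ω) ≤ ω), θ s')
          + phat ω * ψ θ := by
      intro ω
      by_cases h : phat ω = 0
      · simp [h]
      · have hpθ : p θ ω ≠ 0 := by rw [hp]; exact (Real.exp_pos _).ne'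
        rw [Real.log_div h hpθ, hp, Real.log_exp]
        ring
    rw [Finset.sum_congr rfl (fun ω _ => hterm ω)]
    rw [Finset.sum_add_distrib, Finset.sum_sub_distrib, ← Finset.sum_mul, hphat1, one_mul]
  set ηhat : ℝ := ∑ ω ∈ Finset.univ.filter (fun ω => (s : Ω) ≤ ω), phat ω with hηhat
  have hphatc : ∑ ω : Ω, phat ω * c ω = ηhat := by
    rw [hηhat, Finset.sum_filter]
    exact Finset.sum_congr rfl (fun ω _ => by by_cases h : (s : Ω) ≤ ω <;> simp [hc, h])
  -- the function along the line
  set G : ℝ → ℝ := fun t => KL (θstar + t • e) with hG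
  have hGeq : ∀ t : ℝ, G t = (∑ ω : Ω, phat ω * Real.log (phat ω))
      - (∑ ω : Ω, phat ω * a ω) - t * ηhat + Real.log (Z t) := by
    intro t
    have hGt : G t = KL (θstar + t • e) := rfl
    rw [hGt, hKL', hZt]
    have : ∑ ω : Ω, phat ω *
        (∑ s' ∈ S.attach.filter (fun s' : {s : Ω // s ∈ S} => (s' : Ω) ≤ ω),
          (θstar + t • e) s')
        = (∑ ω : Ω, phat ω * a ω) + t * ηhat := by
      rw [← hphatc, Finset.mul_sum, ← Finset.sum_add_distrib]
      refine Finset.sum_congr rfl (fun ω _ => ?_)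
      rw [hline t ω]; ring
    rw [this]; ring
  have hGderiv : HasDerivAt G (-ηhat + (∑ ω : Ω, c ω * Real.exp (a ω)) / Z 0) 0 := by
    have hlog : HasDerivAt (fun t => Real.log (Z t))
        ((∑ ω : Ω, c ω * Real.exp (a ω + 0 * c ω)) / Z 0) 0 :=
      (hZderiv 0).log (hZpos 0).ne'
    have h1 : HasDerivAt (fun t : ℝ => (∑ ω : Ω, phat ω * Real.log (phat ω))
        - (∑ ω : Ω, phat ω * a ω) - t * ηhat + Real.log (Z t))
        (-ηhat + (∑ ω : Ω, c ω * Real.exp (a ω)) / Z 0) 0 := by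
      have h2 : HasDerivAt (fun t : ℝ => (∑ ω : Ω, phat ω * Real.log (phat ω))
          - (∑ ω : Ω, phat ω * a ω) - t * ηhat) (-ηhat) 0 := by
        simpa using (((hasDerivAt_id (0:ℝ)).mul_const ηhat).const_sub
          ((∑ ω : Ω, phat ω * Real.log (phat ω)) - (∑ ω : Ω, phat ω * a ω)))
      have := h2.fun_add hlog
      simpa [sub_sub] using this
    exact HasDerivAt.congr_of_eventuallyEq h1
      (Filter.Eventually.of_forall (fun t => (hGeq t)))
  have hmin0 : IsLocalMin G 0 := by
    apply Filter.Eventually.of_forall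
    intro t
    have : G 0 = KL θstar := by simp [hG]
    rw [this]
    exact hmin _
  have hzero : -ηhat + (∑ ω : Ω, c ω * Real.exp (a ω)) / Z 0 = 0 :=
    hmin0.hasDerivAt_eq_zero hGderiv
  have hnum : (∑ ω : Ω, c ω * Real.exp (a ω)) = ηhat * Z 0 := by
    have h3 : (∑ ω : Ω, c ω * Real.exp (a ω)) / Z 0 = ηhat := by linarith
    field_simp [(hZpos 0).ne'] at h3
    linarith [h3]
  -- conclude
  have hψstar : ψ θstar = Real.log (Z 0) := by
    rw [hψ]
    congr 1
    refine Finset.sum_congr rfl (fun ω _ => ?_)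
    simp [hZ, ha]
  have hexpψ : Real.exp (ψ θstar) = Z 0 := by
    rw [hψstar, Real.exp_log (hZpos 0)]
  have hLHS : (∑ ω ∈ Finset.univ.filter (fun ω => (s : Ω) ≤ ω), p θstar ω)
      = (∑ ω : Ω, c ω * Real.exp (a ω)) / Z 0 := by
    rw [Finset.sum_div, Finset.sum_filter]
    refine Finset.sum_congr rfl (fun ω _ => ?_)
    by_cases h : (s : Ω) ≤ ω
    · rw [if_pos h, hp, Real.exp_sub, hexpψ]
      simp [hc, h, ha]
    · simp [hc, h, hp]
  rw [hLHS]
  rw [hnum]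
  field_simp [(hZpos 0).ne']
end

section
/- Strict convexity and uniqueness of the optimal parameters under linear independence of features: for each s ∈ S let φ_s ∈ ℝ^Ω be the indicator vector φ_s(ω) = 1 if s ≤ ω and 0 otherwise, and suppose the family {φ_s}_{s ∈ S} together with the constant vector (1,…,1) ∈ ℝ^Ω is linearly independent. Then for any probability distribution p̂ on Ω, the function θ ↦ D_KL(p̂, p_θ) on ℝ^S is strictly convex, and hence has at most one minimizer. -/
open scoped Classical BigOperators

/-- Strict convexity and uniqueness of the optimal parameters under linear
independence of the indicator features `φ_s(ω) = 1[s ≤ ω]` together with the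
constant vector: the KL divergence `θ ↦ D_KL(p̂, p_θ)` is strictly convex on
`ℝ^S` and hence has at most one minimizer. -/
theorem KL_strictConvex_of_linearIndependent_features
    {Ω : Type*} [Fintype Ω] [Nonempty Ω] [PartialOrder Ω]
    (S : Finset Ω)
    (φ : {s : Ω // s ∈ S} → Ω → ℝ)
    (hφ : ∀ (s : {s : Ω // s ∈ S}) (ω : Ω), φ s ω = if (s : Ω) ≤ ω then 1 else 0)
    (hli : LinearIndependent ℝ
      (fun o : Option {s : Ω // s ∈ S} => o.elim (fun _ : Ω => (1 : ℝ)) φ))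
    (phat : Ω → ℝ) (hphat0 : ∀ ω, 0 ≤ phat ω) (hphat1 : ∑ ω : Ω, phat ω = 1)
    (ψ : ({s : Ω // s ∈ S} → ℝ) → ℝ)
    (hψ : ∀ θ : {s : Ω // s ∈ S} → ℝ,
      ψ θ = Real.log (∑ ω : Ω,
        Real.exp (∑ s ∈ S.attach.filter (fun s : {s : Ω // s ∈ S} => (s : Ω) ≤ ω), θ s)))
    (p : ({s : Ω // s ∈ S} → ℝ) → Ω → ℝ)
    (hp : ∀ (θ : {s : Ω // s ∈ S} → ℝ) (ω : Ω), p θ ω =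
      Real.exp ((∑ s ∈ S.attach.filter (fun s : {s : Ω // s ∈ S} => (s : Ω) ≤ ω), θ s) - ψ θ))
    (KL : ({s : Ω // s ∈ S} → ℝ) → ℝ)
    (hKL : ∀ θ : {s : Ω // s ∈ S} → ℝ,
      KL θ = ∑ ω : Ω, phat ω * Real.log (phat ω / p θ ω)) :
    StrictConvexOn ℝ Set.univ KL ∧
    (∀ θ₁ θ₂ : {s : Ω // s ∈ S} → ℝ,
      (∀ θ, KL θ₁ ≤ KL θ) → (∀ θ, KL θ₂ ≤ KL θ) → θ₁ = θ₂) := by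
  set L : ({s : Ω // s ∈ S} → ℝ) → Ω → ℝ :=
    fun θ ω => ∑ s ∈ S.attach.filter (fun s : {s : Ω // s ∈ S} => (s : Ω) ≤ ω), θ s with hL
  have hLφ : ∀ θ ω, L θ ω = ∑ s ∈ S.attach, θ s * φ s ω := by
    intro θ ω
    simp only [hL]
    rw [Finset.sum_filter]
    refine Finset.sum_congr rfl fun s _ => ?_
    rw [hφ]
    by_cases h : (s : Ω) ≤ ω <;> simp [h]
  have hLlin : ∀ (a b : ℝ) (θ₁ θ₂ : {s : Ω // s ∈ S} → ℝ) ω,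
      L (a • θ₁ + b • θ₂) ω = a * L θ₁ ω + b * L θ₂ ω := by
    intro a b θ₁ θ₂ ω
    simp [hL, Finset.sum_add_distrib, Finset.mul_sum]
  have hexppos : ∀ θ, 0 < ∑ ω : Ω, Real.exp (L θ ω) := fun θ =>
    Finset.sum_pos (fun ω _ => Real.exp_pos _) Finset.univ_nonempty
  have hψ' : ∀ θ, ψ θ = Real.log (∑ ω : Ω, Real.exp (L θ ω)) := fun θ => hψ θ
  have hexpψ : ∀ θ, Real.exp (ψ θ) = ∑ ω : Ω, Real.exp (L θ ω) := by
    intro θ; rw [hψ' θ]; exact Real.exp_log (hexppos θ)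
  have hsum1 : ∀ θ, ∑ ω : Ω, Real.exp (L θ ω - ψ θ) = 1 := by
    intro θ
    have : ∀ ω : Ω, Real.exp (L θ ω - ψ θ) = Real.exp (L θ ω) / Real.exp (ψ θ) :=
      fun ω => Real.exp_sub _ _
    rw [Finset.sum_congr rfl fun ω _ => this ω, ← Finset.sum_div, hexpψ θ,
      div_self (ne_of_gt (hexppos θ))]
  have hppos : ∀ θ ω, 0 < p θ ω := by intro θ ω; rw [hp]; exact Real.exp_pos _
  -- KL decomposition
  have hKL' : ∀ θ, KL θ = (∑ ω : Ω, phat ω * Real.log (phat ω))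
      - (∑ ω : Ω, phat ω * L θ ω) + ψ θ := by
    intro θ
    rw [hKL]
    have hterm : ∀ ω : Ω, phat ω * Real.log (phat ω / p θ ω)
        = phat ω * Real.log (phat ω) - phat ω * L θ ω + phat ω * ψ θ := by
      intro ω
      by_cases h : phat ω = 0
      · simp [h]
      · rw [Real.log_div h (ne_of_gt (hppos θ ω)), hp, Real.log_exp]
        show phat ω * (Real.log (phat ω) - (L θ ω - ψ θ)) = _
        ring
    rw [Finset.sum_congr rfl fun ω _ => hterm ω, Finset.sum_add_distrib,
      Finset.sum_sub_distrib, ← Finset.sum_mul, hphat1, one_mul]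
  -- strict convexity of ψ
  have hψsc : ∀ (θ₁ θ₂ : {s : Ω // s ∈ S} → ℝ), θ₁ ≠ θ₂ → ∀ a b : ℝ,
      0 < a → 0 < b → a + b = 1 →
      ψ (a • θ₁ + b • θ₂) < a * ψ θ₁ + b * ψ θ₂ := by
    intro θ₁ θ₂ hne a b ha hb hab
    -- there is a point where the centered linear parts differ
    have hex : ∃ ω : Ω, L θ₁ ω - ψ θ₁ ≠ L θ₂ ω - ψ θ₂ := by
      by_contra hcon
      push_neg at hcon
      have hg0 : ∑ o : Option {s : Ω // s ∈ S},
          (Option.elim o (ψ θ₂ - ψ θ₁) (fun s => θ₁ s - θ₂ s)) •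
            (Option.elim o (fun _ : Ω => (1 : ℝ)) φ) = 0 := by
        funext ω
        have hdiff : ∑ s ∈ S.attach, (θ₁ s - θ₂ s) * φ s ω = L θ₁ ω - L θ₂ ω := by
          rw [hLφ, hLφ, ← Finset.sum_sub_distrib]
          exact Finset.sum_congr rfl fun s _ => sub_mul _ _ _
        have hLL : L θ₁ ω - L θ₂ ω = ψ θ₁ - ψ θ₂ := by
          have := hcon ω; linarith
        simp only [Finset.sum_apply, Pi.zero_apply, Pi.smul_apply, smul_eq_mul,
          Fintype.sum_option, Option.elim, Finset.univ_eq_attach]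
        rw [hdiff, hLL]
        ring
      have hall := Fintype.linearIndependent_iff.mp hli
        (fun o => Option.elim o (ψ θ₂ - ψ θ₁) (fun s => θ₁ s - θ₂ s)) hg0
      apply hne
      funext s
      have := hall (some s)
      simpa [sub_eq_zero] using this
    obtain ⟨ω₀, hω₀⟩ := hex
    have key : ∑ ω : Ω, Real.exp (L (a • θ₁ + b • θ₂) ω)
        < Real.exp (a * ψ θ₁ + b * ψ θ₂) := by
      have hconv : ∀ ω : Ω, Real.exp (a * (L θ₁ ω - ψ θ₁) + b * (L θ₂ ω - ψ θ₂))
          ≤ a * Real.exp (L θ₁ ω - ψ θ₁) + b * Real.exp (L θ₂ ω - ψ θ₂) := by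
        intro ω
        have := convexOn_exp.2 (Set.mem_univ (L θ₁ ω - ψ θ₁))
          (Set.mem_univ (L θ₂ ω - ψ θ₂)) ha.le hb.le hab
        simpa using this
      have hstrict : Real.exp (a * (L θ₁ ω₀ - ψ θ₁) + b * (L θ₂ ω₀ - ψ θ₂))
          < a * Real.exp (L θ₁ ω₀ - ψ θ₁) + b * Real.exp (L θ₂ ω₀ - ψ θ₂) := by
        have := strictConvexOn_exp.2 (Set.mem_univ (L θ₁ ω₀ - ψ θ₁))
          (Set.mem_univ (L θ₂ ω₀ - ψ θ₂)) hω₀ ha hb hab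
        simpa using this
      have hrw : ∀ ω : Ω, Real.exp (L (a • θ₁ + b • θ₂) ω)
          = Real.exp (a * (L θ₁ ω - ψ θ₁) + b * (L θ₂ ω - ψ θ₂))
            * Real.exp (a * ψ θ₁ + b * ψ θ₂) := by
        intro ω
        rw [← Real.exp_add, hLlin]
        ring_nf
      calc ∑ ω : Ω, Real.exp (L (a • θ₁ + b • θ₂) ω)
          = ∑ ω : Ω, Real.exp (a * (L θ₁ ω - ψ θ₁) + b * (L θ₂ ω - ψ θ₂))
              * Real.exp (a * ψ θ₁ + b * ψ θ₂) :=
            Finset.sum_congr rfl fun ω _ => hrw ω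
        _ < ∑ ω : Ω, (a * Real.exp (L θ₁ ω - ψ θ₁) + b * Real.exp (L θ₂ ω - ψ θ₂))
              * Real.exp (a * ψ θ₁ + b * ψ θ₂) := by
            refine Finset.sum_lt_sum (fun ω _ => ?_) ⟨ω₀, Finset.mem_univ _, ?_⟩
            · exact mul_le_mul_of_nonneg_right (hconv ω) (Real.exp_pos _).le
            · exact mul_lt_mul_of_pos_right hstrict (Real.exp_pos _)
        _ = (a * ∑ ω : Ω, Real.exp (L θ₁ ω - ψ θ₁)
              + b * ∑ ω : Ω, Real.exp (L θ₂ ω - ψ θ₂))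
              * Real.exp (a * ψ θ₁ + b * ψ θ₂) := by
            rw [← Finset.sum_mul, Finset.sum_add_distrib, ← Finset.mul_sum, ← Finset.mul_sum]
        _ = Real.exp (a * ψ θ₁ + b * ψ θ₂) := by
            rw [hsum1, hsum1, mul_one, mul_one, hab, one_mul]
    have := Real.log_lt_log (hexppos _) key
    rw [Real.log_exp] at this
    rw [hψ' (a • θ₁ + b • θ₂)]
    exact this
  have hKLsc : StrictConvexOn ℝ Set.univ KL := by
    refine ⟨convex_univ, ?_⟩
    intro θ₁ _ θ₂ _ hne a b ha hb hab
    simp only [smul_eq_mul]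
    rw [hKL' (a • θ₁ + b • θ₂), hKL' θ₁, hKL' θ₂]
    have hψlt := hψsc θ₁ θ₂ hne a b ha hb hab
    have hl : ∑ ω : Ω, phat ω * L (a • θ₁ + b • θ₂) ω
        = a * (∑ ω : Ω, phat ω * L θ₁ ω) + b * (∑ ω : Ω, phat ω * L θ₂ ω) := by
      rw [Finset.mul_sum, Finset.mul_sum, ← Finset.sum_add_distrib]
      refine Finset.sum_congr rfl fun ω _ => ?_
      rw [hLlin]; ring
    rw [hl]
    set C := ∑ ω : Ω, phat ω * Real.log (phat ω)
    have hC : a * C + b * C = C := by rw [← add_mul, hab, one_mul]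
    nlinarith [hψlt, hC]
  refine ⟨hKLsc, ?_⟩
  intro θ₁ θ₂ h₁ h₂
  by_contra hne
  have hmid := hKLsc.2 (Set.mem_univ θ₁) (Set.mem_univ θ₂) hne
    (by norm_num : (0:ℝ) < 1/2) (by norm_num : (0:ℝ) < 1/2) (by norm_num)
  simp only [smul_eq_mul] at hmid
  have := h₁ ((1/2 : ℝ) • θ₁ + (1/2 : ℝ) • θ₂)
  have := h₂ ((1/2 : ℝ) • θ₁ + (1/2 : ℝ) • θ₂)
  linarith
end
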